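/- arXiv:2406.02108 — 3 statements merged into one kernel-verified Lean document; each statement's English description precedes it below -/
import Mathlib

section
/- Let τ be a finite monadic vocabulary, d a positive integer, and let 𝓜_m̄ be an ≡_d-equivalence class of τ-models of size n corresponding to the tuple m̄ = (m₁,…,m_t) with entries in ascending order, where t = 2^{|τ|}. Then every FO[τ] sentence that is true exactly in the models of 𝓜_m̄ (among size-n τ-models) has size at least 3·m_{t-1} − 3; in particular, C_d(M) ≥ 3·m_{t-1} − 3 for every M ∈ 𝓜_m̄. -/
/-!
Common definitions: unary (monadic) first-order structures, FO[τ] formulas in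
negation normal form, formula size / quantifier rank / number of quantifiers,
semantics, description complexity, the equivalence `≡_d`, and the entropies.
-/

open Filter

/-- A `τ`-model of size `n`: each point of the domain `{1,…,n}` (modelled as `Fin n`)
is assigned its `τ`-type, i.e. the set of unary predicates of `τ` that hold at it.
This is exactly the data of a structure `(M, P₁^M, …, P_k^M)` with `P_i^M ⊆ M`. -/
abbrev UModel (τ : Type) (n : ℕ) := Fin n → Set τ

/-- `|π|_M`: the number of points of `M` realizing the `τ`-type `π`. -/
noncomputable def typeCount {τ : Type} {n : ℕ} (M : UModel τ n) (π : Set τ) : ℕ :=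
  Set.ncard {a : Fin n | M a = π}

/-- FO[τ] formulas in negation normal form: atomic formulas are `x = y`, `x ≠ y`,
`P(x)` and `¬P(x)`; the connectives are `∧`, `∨` and the quantifiers `∃`, `∀`.
Variables are indexed by natural numbers. -/
inductive FO (τ : Type) : Type
  | eq : ℕ → ℕ → FO τ
  | ne : ℕ → ℕ → FO τ
  | pos : τ → ℕ → FO τ
  | npos : τ → ℕ → FO τ
  | and : FO τ → FO τ → FO τ
  | or : FO τ → FO τ → FO τ
  | ex : ℕ → FO τ → FO τ
  | all : ℕ → FO τ → FO τ

namespace FO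

variable {τ : Type}

/-- The size of a formula: the number of atomic formulas, binary connectives
(`∧`, `∨`) and quantifiers occurring in it. -/
def size : FO τ → ℕ
  | eq _ _ => 1
  | ne _ _ => 1
  | pos _ _ => 1
  | npos _ _ => 1
  | and φ ψ => φ.size + ψ.size + 1
  | or φ ψ => φ.size + ψ.size + 1
  | ex _ φ => φ.size + 1
  | all _ φ => φ.size + 1

/-- The quantifier rank: the maximum number of nested quantifiers. -/
def qrank : FO τ → ℕ
  | eq _ _ => 0
  | ne _ _ => 0
  | pos _ _ => 0
  | npos _ _ => 0
  | and φ ψ => max φ.qrank ψ.qrank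
  | or φ ψ => max φ.qrank ψ.qrank
  | ex _ φ => φ.qrank + 1
  | all _ φ => φ.qrank + 1

/-- The number of quantifier occurrences in a formula. -/
def qcount : FO τ → ℕ
  | eq _ _ => 0
  | ne _ _ => 0
  | pos _ _ => 0
  | npos _ _ => 0
  | and φ ψ => φ.qcount + ψ.qcount
  | or φ ψ => φ.qcount + ψ.qcount
  | ex _ φ => φ.qcount + 1
  | all _ φ => φ.qcount + 1

/-- The free variables of a formula. -/
def freeVars : FO τ → Finset ℕ
  | eq x y => {x, y}
  | ne x y => {x, y}
  | pos _ x => {x}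
  | npos _ x => {x}
  | and φ ψ => φ.freeVars ∪ ψ.freeVars
  | or φ ψ => φ.freeVars ∪ ψ.freeVars
  | ex x φ => φ.freeVars \ {x}
  | all x φ => φ.freeVars \ {x}

/-- A sentence is a formula with no free variables. -/
def IsSentence (φ : FO τ) : Prop := φ.freeVars = ∅

/-- Satisfaction of a formula in a model under a variable assignment. -/
def sat {n : ℕ} (M : UModel τ n) : (ℕ → Fin n) → FO τ → Prop
  | s, eq x y => s x = s y
  | s, ne x y => s x ≠ s y
  | s, pos P x => P ∈ M (s x)
  | s, npos P x => P ∉ M (s x)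
  | s, and φ ψ => sat M s φ ∧ sat M s ψ
  | s, or φ ψ => sat M s φ ∨ sat M s ψ
  | s, ex x φ => ∃ a : Fin n, sat M (Function.update s x a) φ
  | s, all x φ => ∀ a : Fin n, sat M (Function.update s x a) φ

end FO

/-- Truth of a formula in a model (for sentences, independent of the assignment). -/
def Sat {τ : Type} {n : ℕ} (M : UModel τ n) (φ : FO τ) : Prop :=
  ∀ s : ℕ → Fin n, FO.sat M s φ

/-- Two `τ`-models of size `n` are isomorphic iff every `τ`-type is realized by
the same number of points in both. -/
def Iso {τ : Type} {n : ℕ} (M M' : UModel τ n) : Prop :=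
  ∀ π : Set τ, typeCount M π = typeCount M' π

/-- A sentence `φ` defines the model `M` (among `τ`-models of size `n`) if the
models of size `n` satisfying `φ` are exactly those isomorphic to `M`. -/
def Defines {τ : Type} {n : ℕ} (φ : FO τ) (M : UModel τ n) : Prop :=
  ∀ M' : UModel τ n, Sat M' φ ↔ Iso M' M

/-- The description complexity `C(M)`: the size of the smallest FO[τ] sentence
defining `M` among `τ`-models of the same size. -/
noncomputable def descComp {τ : Type} {n : ℕ} (M : UModel τ n) : ℕ :=
  sInf {s : ℕ | ∃ φ : FO τ, φ.IsSentence ∧ Defines φ M ∧ φ.size = s}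

/-- The constant `c_τ := 15|τ|·2^{|τ|}`. -/
def cTau (τ : Type) [Fintype τ] : ℕ := 15 * Fintype.card τ * 2 ^ Fintype.card τ

/-- `M ≡_d M'`: every `τ`-type realized fewer than `d` times in one of the models
is realized exactly the same number of times in both; equivalently, the counts of
realizing points truncated at `d` coincide for all types. -/
def EquivD {τ : Type} {n : ℕ} (d : ℕ) (M M' : UModel τ n) : Prop :=
  ∀ π : Set τ, min (typeCount M π) d = min (typeCount M' π) d

/-- `φ` defines the `≡_d`-equivalence class of `M`: the size-`n` models satisfying
`φ` are exactly those `≡_d`-equivalent to `M`. -/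
def DefinesD {τ : Type} {n : ℕ} (d : ℕ) (φ : FO τ) (M : UModel τ n) : Prop :=
  ∀ M' : UModel τ n, Sat M' φ ↔ EquivD d M' M

/-- The `d`-description complexity `C_d(M)`: the size of the smallest FO_d[τ]
sentence (quantifier rank at most `d`) true exactly in the size-`n` models
`≡_d`-equivalent to `M`. -/
noncomputable def descCompD {τ : Type} {n : ℕ} (d : ℕ) (M : UModel τ n) : ℕ :=
  sInf {s : ℕ | ∃ φ : FO τ, φ.IsSentence ∧ φ.qrank ≤ d ∧ DefinesD d φ M ∧ φ.size = s}

/-- The Shannon entropy `H_S(M) = Σ_π −(|π|_M/n)·log₂(|π|_M/n)` (terms with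
`|π|_M = 0` vanish, as `Real.logb 2 0 = 0`). -/
noncomputable def HS {τ : Type} [Fintype τ] {n : ℕ} (M : UModel τ n) : ℝ :=
  ∑ π : Set τ, -((typeCount M π : ℝ) / n) * Real.logb 2 ((typeCount M π : ℝ) / n)

/-- The Boltzmann entropy `H_B(M)`: `log₂` of the number of `τ`-models with the
same domain that are isomorphic to `M`. -/
noncomputable def HB {τ : Type} {n : ℕ} (M : UModel τ n) : ℝ :=
  Real.logb 2 (Nat.card {M' : UModel τ n // Iso M' M})

/-- The Boltzmann entropy with respect to `≡_d`: `log₂` of the number of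
`τ`-models with the same domain that are `≡_d`-equivalent to `M`. -/
noncomputable def HBd {τ : Type} {n : ℕ} (d : ℕ) (M : UModel τ n) : ℝ :=
  Real.logb 2 (Nat.card {M' : UModel τ n // EquivD d M' M})

namespace FO
variable {τ : Type}

def acount : FO τ → ℕ
  | eq _ _ => 1 | ne _ _ => 1 | pos _ _ => 1 | npos _ _ => 1
  | and φ ψ => φ.acount + ψ.acount
  | or φ ψ => φ.acount + ψ.acount
  | ex _ φ => φ.acount
  | all _ φ => φ.acount

lemma size_id (φ : FO τ) : φ.size + 1 = φ.qcount + 2 * φ.acount := by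
  induction φ <;> simp [size, qcount, acount] <;> omega

lemma qrank_le_qcount (φ : FO τ) : φ.qrank ≤ φ.qcount := by
  induction φ <;> simp [qrank, qcount] <;> omega

lemma acount_pos (φ : FO τ) : 1 ≤ φ.acount := by
  induction φ <;> simp [acount] <;> omega

def eqFreeVars : FO τ → Finset ℕ
  | eq x y => {x, y} | ne x y => {x, y}
  | pos _ _ => ∅ | npos _ _ => ∅
  | and φ ψ => φ.eqFreeVars ∪ ψ.eqFreeVars
  | or φ ψ => φ.eqFreeVars ∪ ψ.eqFreeVars
  | ex x φ => φ.eqFreeVars \ {x}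
  | all x φ => φ.eqFreeVars \ {x}

def edgeFinset : FO τ → Finset (ℕ × ℕ)
  | eq x y => {(x, y)} | ne x y => {(x, y)}
  | pos _ _ => ∅ | npos _ _ => ∅
  | and φ ψ => φ.edgeFinset ∪ ψ.edgeFinset
  | or φ ψ => φ.edgeFinset ∪ ψ.edgeFinset
  | ex _ φ => φ.edgeFinset
  | all _ φ => φ.edgeFinset

lemma eqFreeVars_subset_freeVars (φ : FO τ) : φ.eqFreeVars ⊆ φ.freeVars := by
  induction φ with
  | eq x y => simp [eqFreeVars, freeVars]
  | ne x y => simp [eqFreeVars, freeVars]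
  | pos P x => simp [eqFreeVars, freeVars]
  | npos P x => simp [eqFreeVars, freeVars]
  | and φ ψ ih1 ih2 => exact Finset.union_subset_union ih1 ih2
  | or φ ψ ih1 ih2 => exact Finset.union_subset_union ih1 ih2
  | ex x φ ih => exact Finset.sdiff_subset_sdiff ih (le_refl _)
  | all x φ ih => exact Finset.sdiff_subset_sdiff ih (le_refl _)

lemma edgeFinset_card_le_acount (φ : FO τ) : φ.edgeFinset.card ≤ φ.acount := by
  induction φ with
  | eq x y => simp [edgeFinset, acount]
  | ne x y => simp [edgeFinset, acount]
  | pos P x => simp [edgeFinset, acount]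
  | npos P x => simp [edgeFinset, acount]
  | and φ ψ ih1 ih2 =>
      calc (φ.edgeFinset ∪ ψ.edgeFinset).card ≤ φ.edgeFinset.card + ψ.edgeFinset.card :=
            Finset.card_union_le _ _
        _ ≤ _ := by simpa [acount] using Nat.add_le_add ih1 ih2
  | or φ ψ ih1 ih2 =>
      calc (φ.edgeFinset ∪ ψ.edgeFinset).card ≤ φ.edgeFinset.card + ψ.edgeFinset.card :=
            Finset.card_union_le _ _
        _ ≤ _ := by simpa [acount] using Nat.add_le_add ih1 ih2
  | ex x φ ih => simpa [edgeFinset, acount] using ih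
  | all x φ ih => simpa [edgeFinset, acount] using ih

end FO


namespace GraphAux
open Relation

def R (E : Finset (ℕ × ℕ)) (a b : ℕ) : Prop := (a, b) ∈ E ∨ (b, a) ∈ E

lemma R_symm (E : Finset (ℕ × ℕ)) : Symmetric (R E) := fun _ _ h => h.symm.imp id id

lemma R_mono {E E' : Finset (ℕ × ℕ)} (h : E ⊆ E') {a b : ℕ} : R E a b → R E' a b :=
  fun hr => hr.imp (@h _) (@h _)

def C (E : Finset (ℕ × ℕ)) (x : ℕ) : Set ℕ := {w | w ≠ x ∧ ReflTransGen (R E) x w}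

def Fe (E : Finset (ℕ × ℕ)) (x : ℕ) : Set (ℕ × ℕ) := {e | e ∈ E ∧ ReflTransGen (R E) x e.1}

def verts (E : Finset (ℕ × ℕ)) : Finset ℕ := E.image Prod.fst ∪ E.image Prod.snd

lemma mem_verts_of_reach {E : Finset (ℕ × ℕ)} {x w : ℕ} (h : ReflTransGen (R E) x w)
    (hw : w ≠ x) : w ∈ verts E := by
  induction h with
  | refl => exact absurd rfl hw
  | @tail b w' hab hr _ =>
      rcases hr with hr | hr
      · exact Finset.mem_union.2 (Or.inr (Finset.mem_image.2 ⟨_, hr, rfl⟩))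
      · exact Finset.mem_union.2 (Or.inl (Finset.mem_image.2 ⟨_, hr, rfl⟩))

lemma C_finite (E : Finset (ℕ × ℕ)) (x : ℕ) : (C E x).Finite :=
  Set.Finite.subset (verts E).finite_toSet (fun w hw => mem_verts_of_reach hw.2 hw.1)

lemma Fe_finite (E : Finset (ℕ × ℕ)) (x : ℕ) : (Fe E x).Finite :=
  Set.Finite.subset E.finite_toSet (fun e he => he.1)

lemma first_step {E : Finset (ℕ × ℕ)} {x w : ℕ} (h : ReflTransGen (R E) x w) (hw : w ≠ x) :
    ∃ c, c ≠ x ∧ R E x c := by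
  induction h with
  | refl => exact absurd rfl hw
  | @tail b w' hab hr ih =>
      by_cases hb : b = x
      · subst hb; exact ⟨w', hw, hr⟩
      · exact ih hb

lemma decomp {E : Finset (ℕ × ℕ)} {x c : ℕ} {e : ℕ × ℕ} (he : e ∈ E)
    (hxc : e = (x, c) ∨ e = (c, x)) {w : ℕ} (h : ReflTransGen (R E) x w) :
    ReflTransGen (R (E.erase e)) x w ∨ ReflTransGen (R (E.erase e)) c w := by
  induction h with
  | refl => exact Or.inl ReflTransGen.refl
  | @tail b w' hab hr ih =>
      by_cases hre : R (E.erase e) b w'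
      · exact ih.imp (fun h => h.tail hre) (fun h => h.tail hre)
      · have : (b, w') = e ∨ (w', b) = e := by
          rcases hr with hr | hr
          · left
            by_contra hne
            exact hre (Or.inl (Finset.mem_erase.2 ⟨hne, hr⟩))
          · right
            by_contra hne
            exact hre (Or.inr (Finset.mem_erase.2 ⟨hne, hr⟩))
        rcases hxc with rfl | rfl
        · rcases this with h1 | h1
          · have hw' : w' = c := congrArg Prod.snd h1
            subst hw'; exact Or.inr ReflTransGen.refl
          · have hw' : w' = x := congrArg Prod.fst h1
            subst hw'; exact Or.inl ReflTransGen.refl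
        · rcases this with h1 | h1
          · have hw' : w' = x := congrArg Prod.snd h1
            subst hw'; exact Or.inl ReflTransGen.refl
          · have hw' : w' = c := congrArg Prod.fst h1
            subst hw'; exact Or.inr ReflTransGen.refl

lemma graph_bound_aux : ∀ (N : ℕ) (E : Finset (ℕ × ℕ)) (x : ℕ), E.card ≤ N →
    (C E x).ncard ≤ (Fe E x).ncard := by
  intro N
  induction N with
  | zero =>
      intro E x hE
      have hE0 : E = ∅ := Finset.card_eq_zero.1 (Nat.le_zero.1 hE)
      subst hE0
      have : C (∅ : Finset (ℕ × ℕ)) x = ∅ := by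
        ext w
        simp only [C, Set.mem_setOf_eq, Set.mem_empty_iff_false, iff_false, not_and]
        intro hw hr
        rcases first_step hr hw with ⟨c, _, hc | hc⟩ <;> simp at hc
      rw [this]; simp
  | succ N ih =>
      intro E x hE
      by_cases hC : C E x = ∅
      · rw [hC]; simp
      · obtain ⟨w₀, hw₀⟩ := Set.nonempty_iff_ne_empty.2 hC
        obtain ⟨c, hcx, hRxc⟩ := first_step hw₀.2 hw₀.1
        obtain ⟨e, he, hxc⟩ : ∃ e ∈ E, e = (x, c) ∨ e = (c, x) := by
          rcases hRxc with h | h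
          · exact ⟨(x, c), h, Or.inl rfl⟩
          · exact ⟨(c, x), h, Or.inr rfl⟩
        set E' := E.erase e with hE'
        have hcard : E'.card ≤ N := by
          rw [hE', Finset.card_erase_of_mem he]
          omega
        have hsubE : E' ⊆ E := Finset.erase_subset _ _
        have hmono : ∀ {a b}, ReflTransGen (R E') a b → ReflTransGen (R E) a b :=
          fun h => ReflTransGen.mono (fun _ _ => R_mono hsubE) _ _ h
        have hFeEx : ∀ {y}, Fe E' y ⊆ Fe E x → True := fun _ => trivial
        by_cases hA : ReflTransGen (R E') x c
        · -- components merge; C E x = C E' x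
          have hCeq : C E x = C E' x := by
            ext w
            constructor
            · rintro ⟨hwx, hr⟩
              refine ⟨hwx, ?_⟩
              rcases decomp he hxc hr with h | h
              · exact h
              · exact hA.trans h
            · rintro ⟨hwx, hr⟩
              exact ⟨hwx, hmono hr⟩
          have hFsub : Fe E' x ⊆ Fe E x := fun e' he' => ⟨hsubE he'.1, hmono he'.2⟩
          calc (C E x).ncard = (C E' x).ncard := by rw [hCeq]
            _ ≤ (Fe E' x).ncard := ih E' x hcard
            _ ≤ (Fe E x).ncard := Set.ncard_le_ncard hFsub (Fe_finite E x)
        · -- components disjoint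
          have hsymm : Symmetric (ReflTransGen (R E')) := by
            haveI : Std.Symm (R E') := ⟨fun _ _ h => R_symm E' h⟩
            exact fun a b h => Std.Symm.symm a b h
          have hCsub : C E x ⊆ C E' x ∪ ({c} ∪ C E' c) := by
            rintro w ⟨hwx, hr⟩
            rcases decomp he hxc hr with h | h
            · exact Or.inl ⟨hwx, h⟩
            · by_cases hwc : w = c
              · exact Or.inr (Or.inl hwc)
              · exact Or.inr (Or.inr ⟨hwc, h⟩)
          have hRxcE : ReflTransGen (R E) x c := ReflTransGen.single hRxc
          -- the three pieces of Fe E x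
          have hF1 : Fe E' x ⊆ Fe E x := fun e' he' => ⟨hsubE he'.1, hmono he'.2⟩
          have hF2 : Fe E' c ⊆ Fe E x := fun e' he' =>
            ⟨hsubE he'.1, hRxcE.trans (hmono he'.2)⟩
          have heFe : e ∈ Fe E x := by
            refine ⟨he, ?_⟩
            rcases hxc with rfl | rfl
            · exact ReflTransGen.refl
            · exact hRxcE
          have hd12 : Disjoint (Fe E' x) (Fe E' c) := by
            rw [Set.disjoint_left]
            rintro e' ⟨_, hx'⟩ ⟨_, hc'⟩
            exact hA (hx'.trans (hsymm hc'))
          have hde : e ∉ Fe E' x ∪ Fe E' c := by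
            rintro (⟨hmem, _⟩ | ⟨hmem, _⟩) <;> exact (Finset.notMem_erase e E) hmem
          have hunion : (Fe E' x ∪ Fe E' c ∪ {e}) ⊆ Fe E x := by
            rintro e' ((h | h) | h)
            · exact hF1 h
            · exact hF2 h
            · rcases h with rfl; exact heFe
          have hcount : (Fe E' x).ncard + (Fe E' c).ncard + 1 ≤ (Fe E x).ncard := by
            have h1 : (Fe E' x ∪ Fe E' c).ncard = (Fe E' x).ncard + (Fe E' c).ncard :=
              Set.ncard_union_eq hd12 (Fe_finite E' x) (Fe_finite E' c)
            have h2 : (Fe E' x ∪ Fe E' c ∪ {e}).ncard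
                = (Fe E' x ∪ Fe E' c).ncard + 1 := by
              rw [Set.union_comm, Set.singleton_union,
                Set.ncard_insert_of_notMem hde ((Fe_finite E' x).union (Fe_finite E' c))]
            have h3 : (Fe E' x ∪ Fe E' c ∪ {e}).ncard ≤ (Fe E x).ncard :=
              Set.ncard_le_ncard hunion (Fe_finite E x)
            omega
          have hCcount : (C E x).ncard ≤ (C E' x).ncard + (1 + (C E' c).ncard) := by
            calc (C E x).ncard ≤ (C E' x ∪ ({c} ∪ C E' c)).ncard :=
                  Set.ncard_le_ncard hCsub
                    ((C_finite E' x).union ((Set.finite_singleton c).union (C_finite E' c)))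
              _ ≤ (C E' x).ncard + ({c} ∪ C E' c : Set ℕ).ncard :=
                  Set.ncard_union_le _ _
              _ ≤ (C E' x).ncard + (({c} : Set ℕ).ncard + (C E' c).ncard) :=
                  Nat.add_le_add_left (Set.ncard_union_le _ _) _
              _ = _ := by rw [Set.ncard_singleton]
          have ihx := ih E' x hcard
          have ihc := ih E' c hcard
          omega

lemma graph_bound (E : Finset (ℕ × ℕ)) (x : ℕ) :
    (C E x).ncard ≤ E.card := by
  calc (C E x).ncard ≤ (Fe E x).ncard := graph_bound_aux E.card E x le_rfl
    _ ≤ (↑E : Set (ℕ × ℕ)).ncard := Set.ncard_le_ncard (fun e he => he.1) E.finite_toSet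
    _ = E.card := Set.ncard_coe_finset E

end GraphAux


namespace CardAux

lemma image_card_congr {α : Type*} [DecidableEq α] :
    ∀ (W : Finset ℕ) (f g : ℕ → α), (∀ x ∈ W, ∀ y ∈ W, (f x = f y ↔ g x = g y)) →
      (W.image f).card = (W.image g).card := by
  intro W
  induction W using Finset.induction_on with
  | empty => simp
  | insert _ _ ha =>
      rename_i a W ih
      intro f g h
      have hrest : ∀ x ∈ W, ∀ y ∈ W, (f x = f y ↔ g x = g y) := by
        intro x hx y hy
        exact h x (Finset.mem_insert_of_mem hx) y (Finset.mem_insert_of_mem hy)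
      have hmem : f a ∈ W.image f ↔ g a ∈ W.image g := by
        simp only [Finset.mem_image]
        constructor
        · rintro ⟨x, hx, hfx⟩
          exact ⟨x, hx, ((h x (Finset.mem_insert_of_mem hx) a (Finset.mem_insert_self a W)).1 hfx)⟩
        · rintro ⟨x, hx, hgx⟩
          exact ⟨x, hx, ((h x (Finset.mem_insert_of_mem hx) a (Finset.mem_insert_self a W)).2 hgx)⟩
      rw [Finset.image_insert, Finset.image_insert]
      by_cases hf : f a ∈ W.image f
      · rw [Finset.insert_eq_self.2 hf, Finset.insert_eq_self.2 (hmem.1 hf), ih f g hrest]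
      · rw [Finset.card_insert_of_notMem hf,
          Finset.card_insert_of_notMem (fun hg => hf (hmem.2 hg)), ih f g hrest]

lemma exists_fresh {m : ℕ} (S : Set (Fin m)) (V : Finset (Fin m)) (h : V.card < S.ncard) :
    ∃ a ∈ S, a ∉ V := by
  by_contra hc
  push_neg at hc
  have hsub : S ⊆ ↑V := fun a ha => hc a ha
  have := Set.ncard_le_ncard hsub V.finite_toSet
  rw [Set.ncard_coe_finset] at this
  omega

lemma card_add_one_le_ncard {m : ℕ} {S : Set (Fin m)} {V : Finset (Fin m)}
    (hV : ∀ b ∈ V, b ∈ S) {a : Fin m} (ha : a ∈ S) (hav : a ∉ V) :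
    V.card + 1 ≤ S.ncard := by
  have hsub : (insert a ↑V : Set (Fin m)) ⊆ S := by
    rintro b (rfl | hb)
    · exact ha
    · exact hV b hb
  have h1 : (insert a ↑V : Set (Fin m)).ncard = V.card + 1 := by
    rw [Set.ncard_insert_of_notMem (by simpa using hav) V.finite_toSet, Set.ncard_coe_finset]
  have := Set.ncard_le_ncard hsub (Set.toFinite S)
  omega

end CardAux

section Transfer

open Relation GraphAux CardAux

variable {τ : Type} {n : ℕ}

/-- The connectivity relation of the equality-atom graph of a formula. -/
def FO.Conn (φ : FO τ) : ℕ → ℕ → Prop := Relation.ReflTransGen (GraphAux.R φ.edgeFinset)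

lemma pick_partner (M M' : UModel τ n) (q : ℕ)
    (Htc : ∀ ρ : Set τ, min (typeCount M ρ) q = min (typeCount M' ρ) q)
    (Fx : Finset ℕ) (s s' : ℕ → Fin n)
    (hT : ∀ y ∈ Fx, M (s y) = M' (s' y))
    (hP : ∀ y ∈ Fx, ∀ z ∈ Fx, (s y = s z ↔ s' y = s' z))
    (hbud : (Fx.image s).card + 1 ≤ q)
    (a : Fin n) :
    ∃ a', M' a' = M a ∧ ∀ z ∈ Fx, (a = s z ↔ a' = s' z) := by
  classical
  by_cases hc : ∃ w ∈ Fx, s w = a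
  · obtain ⟨w₀, hw₀, hsw₀⟩ := hc
    refine ⟨s' w₀, by rw [← hsw₀, hT w₀ hw₀], ?_⟩
    intro z hz
    rw [← hsw₀]
    exact (hP w₀ hw₀ z hz).trans (Iff.symm (by constructor <;> exact fun h => h))
  · push_neg at hc
    set π := M a with hπ
    set Wπ := Fx.filter (fun w => M (s w) = π) with hWπ
    have hWsub : Wπ ⊆ Fx := Finset.filter_subset _ _
    have hu1 : (Wπ.image s).card + 1 ≤ typeCount M π := by
      refine card_add_one_le_ncard ?_ (by exact rfl) ?_
      · intro b hb
        obtain ⟨w, hw, rfl⟩ := Finset.mem_image.1 hb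
        exact (Finset.mem_filter.1 hw).2
      · intro hmem
        obtain ⟨w, hw, hsw⟩ := Finset.mem_image.1 hmem
        exact hc w (hWsub hw) hsw
    have huq : (Wπ.image s).card + 1 ≤ q := by
      have := Finset.card_le_card (Finset.image_subset_image hWsub (f := s))
      omega
    have htc' : (Wπ.image s).card + 1 ≤ typeCount M' π := by
      have := Htc π
      omega
    have hcards : (Wπ.image s').card = (Wπ.image s).card :=
      image_card_congr Wπ s' s (fun x hx y hy => (hP x (hWsub hx) y (hWsub hy)).symm)
    obtain ⟨a', ha'π, ha'W⟩ :=
      exists_fresh {b : Fin n | M' b = π} (Wπ.image s') (by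
        rw [hcards]
        exact lt_of_lt_of_le (Nat.lt_succ_self _) htc')
    refine ⟨a', ha'π, ?_⟩
    intro z hz
    constructor
    · intro h
      exact absurd h.symm (hc z hz)
    · intro h
      exfalso
      by_cases hzπ : M (s z) = π
      · exact ha'W (by
          rw [h]
          exact Finset.mem_image_of_mem s' (Finset.mem_filter.2 ⟨hz, hzπ⟩))
      · have : M' (s' z) = M (s z) := (hT z hz).symm
        rw [← h, ha'π] at this
        exact hzπ this.symm

theorem transferQ (M M' : UModel τ n) (q : ℕ)
    (Htc : ∀ ρ : Set τ, min (typeCount M ρ) q = min (typeCount M' ρ) q) :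
    ∀ φ : FO τ, ∀ s s' : ℕ → Fin n,
      φ.qrank + (φ.freeVars.image s).card ≤ q →
      (∀ y ∈ φ.freeVars, M (s y) = M' (s' y)) →
      (∀ y ∈ φ.freeVars, ∀ z ∈ φ.freeVars, (s y = s z ↔ s' y = s' z)) →
      FO.sat M s φ → FO.sat M' s' φ := by
  classical
  intro φ
  induction φ with
  | eq x y =>
      intro s s' _ _ hP hsat
      exact (hP x (by simp [FO.freeVars]) y (by simp [FO.freeVars])).1 hsat
  | ne x y =>
      intro s s' _ _ hP hsat
      exact fun h => hsat ((hP x (by simp [FO.freeVars]) y (by simp [FO.freeVars])).2 h)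
  | pos P x =>
      intro s s' _ hT _ hsat
      have := hT x (by simp [FO.freeVars])
      simpa [FO.sat, ← this] using hsat
  | npos P x =>
      intro s s' _ hT _ hsat
      have := hT x (by simp [FO.freeVars])
      simpa [FO.sat, ← this] using hsat
  | and φ ψ ih1 ih2 =>
      intro s s' hbud hT hP hsat
      have hb1 : φ.qrank + (φ.freeVars.image s).card ≤ q := by
        have h1 : (φ.freeVars.image s).card ≤ ((φ.and ψ).freeVars.image s).card :=
          Finset.card_le_card (Finset.image_subset_image Finset.subset_union_left)
        have h2 : φ.qrank ≤ (φ.and ψ).qrank := le_max_left _ _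
        omega
      have hb2 : ψ.qrank + (ψ.freeVars.image s).card ≤ q := by
        have h1 : (ψ.freeVars.image s).card ≤ ((φ.and ψ).freeVars.image s).card :=
          Finset.card_le_card (Finset.image_subset_image Finset.subset_union_right)
        have h2 : ψ.qrank ≤ (φ.and ψ).qrank := le_max_right _ _
        omega
      exact ⟨ih1 s s' hb1 (fun y hy => hT y (Finset.mem_union_left _ hy))
          (fun y hy z hz => hP y (Finset.mem_union_left _ hy) z (Finset.mem_union_left _ hz))
          hsat.1,
        ih2 s s' hb2 (fun y hy => hT y (Finset.mem_union_right _ hy))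
          (fun y hy z hz => hP y (Finset.mem_union_right _ hy) z (Finset.mem_union_right _ hz))
          hsat.2⟩
  | or φ ψ ih1 ih2 =>
      intro s s' hbud hT hP hsat
      have hb1 : φ.qrank + (φ.freeVars.image s).card ≤ q := by
        have h1 : (φ.freeVars.image s).card ≤ ((φ.or ψ).freeVars.image s).card :=
          Finset.card_le_card (Finset.image_subset_image Finset.subset_union_left)
        have h2 : φ.qrank ≤ (φ.or ψ).qrank := le_max_left _ _
        omega
      have hb2 : ψ.qrank + (ψ.freeVars.image s).card ≤ q := by
        have h1 : (ψ.freeVars.image s).card ≤ ((φ.or ψ).freeVars.image s).card :=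
          Finset.card_le_card (Finset.image_subset_image Finset.subset_union_right)
        have h2 : ψ.qrank ≤ (φ.or ψ).qrank := le_max_right _ _
        omega
      rcases hsat with hsat | hsat
      · exact Or.inl (ih1 s s' hb1 (fun y hy => hT y (Finset.mem_union_left _ hy))
          (fun y hy z hz => hP y (Finset.mem_union_left _ hy) z (Finset.mem_union_left _ hz)) hsat)
      · exact Or.inr (ih2 s s' hb2 (fun y hy => hT y (Finset.mem_union_right _ hy))
          (fun y hy z hz => hP y (Finset.mem_union_right _ hy) z (Finset.mem_union_right _ hz)) hsat)
  | ex x ψ ih =>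
      intro s s' hbud hT hP hsat
      obtain ⟨a, ha⟩ := hsat
      set Fx : Finset ℕ := ψ.freeVars \ {x} with hFx
      have hFeq : (FO.ex x ψ).freeVars = Fx := rfl
      rw [hFeq] at hbud hT hP
      have hmem : ∀ {y : ℕ}, y ∈ ψ.freeVars → y ≠ x → y ∈ Fx := by
        intro y hy hyx
        rw [hFx]
        exact Finset.mem_sdiff.2 ⟨hy, by simp [hyx]⟩
      have hbud' : (Fx.image s).card + 1 ≤ q := by
        have : (FO.ex x ψ).qrank = ψ.qrank + 1 := rfl
        omega
      obtain ⟨a', ha'T, ha'P⟩ := pick_partner M M' q Htc Fx s s' hT hP hbud' a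
      refine ⟨a', ?_⟩
      have hsub : ψ.freeVars ⊆ insert x Fx := by
        intro y hy
        by_cases hyx : y = x
        · simp [hyx]
        · exact Finset.mem_insert_of_mem (Finset.mem_sdiff.2 ⟨hy, by simp [hyx]⟩)
      have himg : ψ.freeVars.image (Function.update s x a) ⊆ insert a (Fx.image s) := by
        intro b hb
        obtain ⟨y, hy, rfl⟩ := Finset.mem_image.1 hb
        by_cases hyx : y = x
        · subst hyx; simp [Function.update_self]
        · refine Finset.mem_insert_of_mem ?_
          rw [Function.update_of_ne hyx]
          exact Finset.mem_image_of_mem s (hmem hy hyx)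
      have hbud'' : ψ.qrank + ((ψ.freeVars.image (Function.update s x a)).card) ≤ q := by
        have h1 : (ψ.freeVars.image (Function.update s x a)).card ≤ (Fx.image s).card + 1 := by
          calc (ψ.freeVars.image (Function.update s x a)).card
              ≤ (insert a (Fx.image s)).card := Finset.card_le_card himg
            _ ≤ (Fx.image s).card + 1 := Finset.card_insert_le _ _
        have h2 : (FO.ex x ψ).qrank = ψ.qrank + 1 := rfl
        omega
      refine ih (Function.update s x a) (Function.update s' x a') hbud'' ?_ ?_ ha
      · intro y hy
        by_cases hyx : y = x
        · subst hyx; simp [Function.update_self, ha'T]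
        · rw [Function.update_of_ne hyx, Function.update_of_ne hyx]
          exact hT y (hmem hy hyx)
      · intro y hy z hz
        by_cases hyx : y = x <;> by_cases hzx : z = x
        · subst hyx; subst hzx; simp
        · subst hyx
          simp only [Function.update_self, Function.update_of_ne hzx]
          exact ha'P z (hmem hz hzx)
        · subst hzx
          simp only [Function.update_self, Function.update_of_ne hyx]
          have := ha'P y (hmem hy hyx)
          constructor
          · intro h; exact ((this.1 h.symm)).symm
          · intro h; exact ((this.2 h.symm)).symm
        · simp only [Function.update_of_ne hyx, Function.update_of_ne hzx]
          exact hP y (hmem hy hyx) z (hmem hz hzx)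
  | all x ψ ih =>
      intro s s' hbud hT hP hsat
      intro a'
      set Fx : Finset ℕ := ψ.freeVars \ {x} with hFx
      have hFeq : (FO.all x ψ).freeVars = Fx := rfl
      rw [hFeq] at hbud hT hP
      have hmem : ∀ {y : ℕ}, y ∈ ψ.freeVars → y ≠ x → y ∈ Fx := by
        intro y hy hyx
        rw [hFx]
        exact Finset.mem_sdiff.2 ⟨hy, by simp [hyx]⟩
      have hcards : (Fx.image s').card = (Fx.image s).card :=
        image_card_congr Fx s' s (fun u hu v hv => (hP u hu v hv).symm)
      have hbud' : (Fx.image s').card + 1 ≤ q := by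
        have : (FO.all x ψ).qrank = ψ.qrank + 1 := rfl
        omega
      obtain ⟨a, haT, haP⟩ := pick_partner M' M q (fun ρ => (Htc ρ).symm) Fx s' s
        (fun y hy => (hT y hy).symm)
        (fun y hy z hz => (hP y hy z hz).symm)
        hbud' a'
      have himg : ψ.freeVars.image (Function.update s x a) ⊆ insert a (Fx.image s) := by
        intro b hb
        obtain ⟨y, hy, rfl⟩ := Finset.mem_image.1 hb
        by_cases hyx : y = x
        · subst hyx; simp [Function.update_self]
        · refine Finset.mem_insert_of_mem ?_
          rw [Function.update_of_ne hyx]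
          exact Finset.mem_image_of_mem s (hmem hy hyx)
      have hbud'' : ψ.qrank + ((ψ.freeVars.image (Function.update s x a)).card) ≤ q := by
        have h1 : (ψ.freeVars.image (Function.update s x a)).card ≤ (Fx.image s).card + 1 := by
          calc (ψ.freeVars.image (Function.update s x a)).card
              ≤ (insert a (Fx.image s)).card := Finset.card_le_card himg
            _ ≤ (Fx.image s).card + 1 := Finset.card_insert_le _ _
        have h2 : (FO.all x ψ).qrank = ψ.qrank + 1 := rfl
        omega
      refine ih (Function.update s x a) (Function.update s' x a') hbud'' ?_ ?_ (hsat a)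
      · intro y hy
        by_cases hyx : y = x
        · subst hyx; simp [Function.update_self, haT]
        · rw [Function.update_of_ne hyx, Function.update_of_ne hyx]
          exact hT y (hmem hy hyx)
      · intro y hy z hz
        by_cases hyx : y = x <;> by_cases hzx : z = x
        · subst hyx; subst hzx; simp
        · subst hyx
          simp only [Function.update_self, Function.update_of_ne hzx]
          exact (haP z (hmem hz hzx)).symm
        · subst hzx
          simp only [Function.update_self, Function.update_of_ne hyx]
          have := haP y (hmem hy hyx)
          exact ⟨fun h => (this.2 h.symm).symm, fun h => (this.1 h.symm).symm⟩
        · simp only [Function.update_of_ne hyx, Function.update_of_ne hzx]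
          exact hP y (hmem hy hyx) z (hmem hz hzx)

end Transfer
section TransferA

open Relation GraphAux CardAux

variable {τ : Type} {n : ℕ}

lemma FO.Conn.symm {φ : FO τ} : ∀ {a b : ℕ}, φ.Conn a b → φ.Conn b a :=
  fun h => by
    haveI : Std.Symm (GraphAux.R φ.edgeFinset) := ⟨fun _ _ h => GraphAux.R_symm φ.edgeFinset h⟩
    exact Std.Symm.symm (r := Relation.ReflTransGen (GraphAux.R φ.edgeFinset)) _ _ h

theorem transferA (M M' : UModel τ n) (q : ℕ)
    (Htc : ∀ ρ : Set τ, min (typeCount M ρ) q = min (typeCount M' ρ) q) :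
    ∀ φ : FO τ, φ.acount < q → ∀ s s' : ℕ → Fin n,
      (∀ y ∈ φ.freeVars, M (s y) = M' (s' y)) →
      (∀ y ∈ φ.eqFreeVars, ∀ z ∈ φ.eqFreeVars, φ.Conn y z → (s y = s z ↔ s' y = s' z)) →
      FO.sat M s φ → FO.sat M' s' φ := by
  classical
  intro φ
  induction φ with
  | eq x y =>
      intro _ s s' _ hP hsat
      refine (hP x (by simp [FO.eqFreeVars]) y (by simp [FO.eqFreeVars]) ?_).1 hsat
      exact Relation.ReflTransGen.single (Or.inl (by simp [FO.edgeFinset]))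
  | ne x y =>
      intro _ s s' _ hP hsat
      intro h
      refine hsat ((hP x (by simp [FO.eqFreeVars]) y (by simp [FO.eqFreeVars]) ?_).2 h)
      exact Relation.ReflTransGen.single (Or.inl (by simp [FO.edgeFinset]))
  | pos P x =>
      intro _ s s' hT _ hsat
      have := hT x (by simp [FO.freeVars])
      simpa [FO.sat, ← this] using hsat
  | npos P x =>
      intro _ s s' hT _ hsat
      have := hT x (by simp [FO.freeVars])
      simpa [FO.sat, ← this] using hsat
  | and φ ψ ih1 ih2 =>
      intro hac s s' hT hP hsat
      have hac1 : φ.acount < q := by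
        have := ψ.acount_pos
        simp only [FO.acount] at hac
        omega
      have hac2 : ψ.acount < q := by
        have := φ.acount_pos
        simp only [FO.acount] at hac
        omega
      have hc1 : ∀ {a b : ℕ}, φ.Conn a b → (φ.and ψ).Conn a b :=
        fun h => ReflTransGen.mono (fun _ _ => R_mono Finset.subset_union_left) _ _ h
      have hc2 : ∀ {a b : ℕ}, ψ.Conn a b → (φ.and ψ).Conn a b :=
        fun h => ReflTransGen.mono (fun _ _ => R_mono Finset.subset_union_right) _ _ h
      exact ⟨ih1 hac1 s s' (fun y hy => hT y (Finset.mem_union_left _ hy))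
          (fun y hy z hz hcon => hP y (Finset.mem_union_left _ hy) z
            (Finset.mem_union_left _ hz) (hc1 hcon)) hsat.1,
        ih2 hac2 s s' (fun y hy => hT y (Finset.mem_union_right _ hy))
          (fun y hy z hz hcon => hP y (Finset.mem_union_right _ hy) z
            (Finset.mem_union_right _ hz) (hc2 hcon)) hsat.2⟩
  | or φ ψ ih1 ih2 =>
      intro hac s s' hT hP hsat
      have hac1 : φ.acount < q := by
        have := ψ.acount_pos
        simp only [FO.acount] at hac
        omega
      have hac2 : ψ.acount < q := by
        have := φ.acount_pos
        simp only [FO.acount] at hac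
        omega
      have hc1 : ∀ {a b : ℕ}, φ.Conn a b → (φ.or ψ).Conn a b :=
        fun h => ReflTransGen.mono (fun _ _ => R_mono Finset.subset_union_left) _ _ h
      have hc2 : ∀ {a b : ℕ}, ψ.Conn a b → (φ.or ψ).Conn a b :=
        fun h => ReflTransGen.mono (fun _ _ => R_mono Finset.subset_union_right) _ _ h
      rcases hsat with hsat | hsat
      · exact Or.inl (ih1 hac1 s s' (fun y hy => hT y (Finset.mem_union_left _ hy))
          (fun y hy z hz hcon => hP y (Finset.mem_union_left _ hy) z
            (Finset.mem_union_left _ hz) (hc1 hcon)) hsat)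
      · exact Or.inr (ih2 hac2 s s' (fun y hy => hT y (Finset.mem_union_right _ hy))
          (fun y hy z hz hcon => hP y (Finset.mem_union_right _ hy) z
            (Finset.mem_union_right _ hz) (hc2 hcon)) hsat)
  | ex x ψ ih =>
      intro hac s s' hT hP hsat
      obtain ⟨a, ha⟩ := hsat
      set W : Finset ℕ := ψ.eqFreeVars.filter (fun w => w ≠ x ∧ ψ.Conn x w) with hW
      have hWprop : ∀ w ∈ W, w ∈ ψ.eqFreeVars ∧ w ≠ x ∧ ψ.Conn x w := by
        intro w hw
        rw [hW] at hw
        exact ⟨(Finset.mem_filter.1 hw).1, (Finset.mem_filter.1 hw).2⟩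
      have hWmem : ∀ {w : ℕ}, w ∈ ψ.eqFreeVars → w ≠ x → ψ.Conn x w → w ∈ W := by
        intro w h1 h2 h3
        rw [hW]
        exact Finset.mem_filter.2 ⟨h1, h2, h3⟩
      have hWeqf : ∀ w ∈ W, w ∈ (FO.ex x ψ).eqFreeVars := by
        intro w hw
        exact Finset.mem_sdiff.2 ⟨(hWprop w hw).1, by simp [(hWprop w hw).2.1]⟩
      have hWfree : ∀ w ∈ W, w ∈ (FO.ex x ψ).freeVars := by
        intro w hw
        exact (FO.ex x ψ).eqFreeVars_subset_freeVars (hWeqf w hw)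
      have hT_W : ∀ y ∈ W, M (s y) = M' (s' y) := fun y hy => hT y (hWfree y hy)
      have hP_W : ∀ y ∈ W, ∀ z ∈ W, (s y = s z ↔ s' y = s' z) := by
        intro y hy z hz
        exact hP y (hWeqf y hy) z (hWeqf z hz)
          (((hWprop y hy).2.2).symm.trans ((hWprop z hz).2.2))
      have hbudW : (W.image s).card + 1 ≤ q := by
        have h1 : (W.image s).card ≤ W.card := Finset.card_image_le
        have h2 : (↑W : Set ℕ) ⊆ C ψ.edgeFinset x := by
          intro w hw
          have := hWprop w (by simpa using hw)
          exact ⟨this.2.1, this.2.2⟩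
        have h3 : W.card ≤ (C ψ.edgeFinset x).ncard := by
          rw [← Set.ncard_coe_finset]
          exact Set.ncard_le_ncard h2 (C_finite _ _)
        have h4 := graph_bound ψ.edgeFinset x
        have h5 := ψ.edgeFinset_card_le_acount
        have h6 : (FO.ex x ψ).acount = ψ.acount := rfl
        omega
      obtain ⟨a', ha'T, ha'P⟩ := pick_partner M M' q Htc W s s' hT_W hP_W hbudW a
      refine ⟨a', ?_⟩
      refine ih (by exact hac) (Function.update s x a) (Function.update s' x a') ?_ ?_ ha
      · intro y hy
        by_cases hyx : y = x
        · subst hyx; simp [Function.update_self, ha'T]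
        · rw [Function.update_of_ne hyx, Function.update_of_ne hyx]
          exact hT y (Finset.mem_sdiff.2 ⟨hy, by simp [hyx]⟩)
      · intro y hy z hz hcon
        by_cases hyx : y = x <;> by_cases hzx : z = x
        · subst hyx; subst hzx; simp
        · subst hyx
          simp only [Function.update_self, Function.update_of_ne hzx]
          exact ha'P z (hWmem hz hzx hcon)
        · subst hzx
          simp only [Function.update_self, Function.update_of_ne hyx]
          have := ha'P y (hWmem hy hyx hcon.symm)
          exact ⟨fun h => (this.1 h.symm).symm, fun h => (this.2 h.symm).symm⟩
        · simp only [Function.update_of_ne hyx, Function.update_of_ne hzx]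
          exact hP y (Finset.mem_sdiff.2 ⟨hy, by simp [hyx]⟩)
            z (Finset.mem_sdiff.2 ⟨hz, by simp [hzx]⟩) hcon
  | all x ψ ih =>
      intro hac s s' hT hP hsat
      intro a'
      set W : Finset ℕ := ψ.eqFreeVars.filter (fun w => w ≠ x ∧ ψ.Conn x w) with hW
      have hWprop : ∀ w ∈ W, w ∈ ψ.eqFreeVars ∧ w ≠ x ∧ ψ.Conn x w := by
        intro w hw
        rw [hW] at hw
        exact ⟨(Finset.mem_filter.1 hw).1, (Finset.mem_filter.1 hw).2⟩
      have hWmem : ∀ {w : ℕ}, w ∈ ψ.eqFreeVars → w ≠ x → ψ.Conn x w → w ∈ W := by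
        intro w h1 h2 h3
        rw [hW]
        exact Finset.mem_filter.2 ⟨h1, h2, h3⟩
      have hWeqf : ∀ w ∈ W, w ∈ (FO.all x ψ).eqFreeVars := by
        intro w hw
        exact Finset.mem_sdiff.2 ⟨(hWprop w hw).1, by simp [(hWprop w hw).2.1]⟩
      have hWfree : ∀ w ∈ W, w ∈ (FO.all x ψ).freeVars := by
        intro w hw
        exact (FO.all x ψ).eqFreeVars_subset_freeVars (hWeqf w hw)
      have hT_W : ∀ y ∈ W, M' (s' y) = M (s y) := fun y hy => (hT y (hWfree y hy)).symm
      have hP_W : ∀ y ∈ W, ∀ z ∈ W, (s' y = s' z ↔ s y = s z) := by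
        intro y hy z hz
        exact (hP y (hWeqf y hy) z (hWeqf z hz)
          (((hWprop y hy).2.2).symm.trans ((hWprop z hz).2.2))).symm
      have hbudW : (W.image s').card + 1 ≤ q := by
        have h1 : (W.image s').card ≤ W.card := Finset.card_image_le
        have h2 : (↑W : Set ℕ) ⊆ C ψ.edgeFinset x := by
          intro w hw
          have := hWprop w (by simpa using hw)
          exact ⟨this.2.1, this.2.2⟩
        have h3 : W.card ≤ (C ψ.edgeFinset x).ncard := by
          rw [← Set.ncard_coe_finset]
          exact Set.ncard_le_ncard h2 (C_finite _ _)
        have h4 := graph_bound ψ.edgeFinset x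
        have h5 := ψ.edgeFinset_card_le_acount
        have h6 : (FO.all x ψ).acount = ψ.acount := rfl
        omega
      obtain ⟨a, haT, haP⟩ := pick_partner M' M q (fun ρ => (Htc ρ).symm) W s' s
        hT_W hP_W hbudW a'
      refine ih (by exact hac) (Function.update s x a) (Function.update s' x a') ?_ ?_ (hsat a)
      · intro y hy
        by_cases hyx : y = x
        · subst hyx; simp [Function.update_self, haT]
        · rw [Function.update_of_ne hyx, Function.update_of_ne hyx]
          exact hT y (Finset.mem_sdiff.2 ⟨hy, by simp [hyx]⟩)
      · intro y hy z hz hcon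
        by_cases hyx : y = x <;> by_cases hzx : z = x
        · subst hyx; subst hzx; simp
        · subst hyx
          simp only [Function.update_self, Function.update_of_ne hzx]
          exact (haP z (hWmem hz hzx hcon)).symm
        · subst hzx
          simp only [Function.update_self, Function.update_of_ne hyx]
          have := haP y (hWmem hy hyx hcon.symm)
          exact ⟨fun h => (this.2 h.symm).symm, fun h => (this.1 h.symm).symm⟩
        · simp only [Function.update_of_ne hyx, Function.update_of_ne hzx]
          exact hP y (Finset.mem_sdiff.2 ⟨hy, by simp [hyx]⟩)
            z (Finset.mem_sdiff.2 ⟨hz, by simp [hzx]⟩) hcon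

end TransferA
section Retype

variable {τ : Type} {n : ℕ}

lemma retype (M : UModel τ n) (ρ₁ ρ₂ : Set τ) (hne : ρ₁ ≠ ρ₂) (r : ℕ)
    (hr : r ≤ typeCount M ρ₁) :
    ∃ M₂ : UModel τ n, typeCount M₂ ρ₁ = r ∧
      typeCount M₂ ρ₂ = typeCount M ρ₂ + (typeCount M ρ₁ - r) ∧
      ∀ ρ, ρ ≠ ρ₁ → ρ ≠ ρ₂ → typeCount M₂ ρ = typeCount M ρ := by
  classical
  set A : Set (Fin n) := {a | M a = ρ₁} with hA
  have hAfin : A.Finite := Set.toFinite A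
  have hAcard : hAfin.toFinset.card = typeCount M ρ₁ := by
    rw [typeCount, ← Set.ncard_coe_finset, Set.Finite.coe_toFinset]
  obtain ⟨T, hTsub, hTcard⟩ :=
    Finset.exists_subset_card_eq (s := hAfin.toFinset) (n := typeCount M ρ₁ - r) (by omega)
  set M₂ : UModel τ n := fun a => if a ∈ T then ρ₂ else M a with hM₂
  have hTA : ∀ a ∈ T, M a = ρ₁ := by
    intro a ha
    have := hTsub ha
    rw [Set.Finite.mem_toFinset] at this
    exact this
  refine ⟨M₂, ?_, ?_, ?_⟩
  · -- typeCount M₂ ρ₁ = r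
    have hset : {a : Fin n | M₂ a = ρ₁} = A \ ↑T := by
      ext a
      simp only [Set.mem_setOf_eq, Set.mem_diff, hM₂, Finset.coe_mem, Set.mem_setOf_eq,
        Finset.mem_coe]
      by_cases haT : a ∈ T
      · simp [haT, hne.symm, hA]
      · simp [haT, hA]
    have hTsubA : (↑T : Set (Fin n)) ⊆ A := by
      intro a ha
      rw [Finset.mem_coe] at ha
      exact hTA a ha
    rw [typeCount, hset, Set.ncard_diff hTsubA]
    rw [Set.ncard_coe_finset, hTcard]
    have : A.ncard = typeCount M ρ₁ := rfl
    omega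
  · -- typeCount M₂ ρ₂
    have hset : {a : Fin n | M₂ a = ρ₂} = {a : Fin n | M a = ρ₂} ∪ ↑T := by
      ext a
      simp only [Set.mem_setOf_eq, Set.mem_union, hM₂, Finset.mem_coe]
      by_cases haT : a ∈ T
      · simp [haT]
      · simp [haT]
    have hdisj : Disjoint {a : Fin n | M a = ρ₂} (↑T : Set (Fin n)) := by
      rw [Set.disjoint_left]
      intro a ha haT
      rw [Finset.mem_coe] at haT
      rw [Set.mem_setOf_eq] at ha
      exact hne (by rw [← hTA a haT, ha])
    rw [typeCount, hset, Set.ncard_union_eq hdisj (Set.toFinite _) (Set.toFinite _),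
      Set.ncard_coe_finset, hTcard]
    rfl
  · intro ρ hρ1 hρ2
    have hset : {a : Fin n | M₂ a = ρ} = {a : Fin n | M a = ρ} := by
      ext a
      simp only [Set.mem_setOf_eq, hM₂]
      by_cases haT : a ∈ T
      · simp [haT, hρ2.symm]
        intro h
        exact absurd (by rw [← hTA a haT, h]) hρ1.symm
      · simp [haT]
    rw [typeCount, hset, typeCount]

end Retype
section CountFml

variable {τ : Type} {n : ℕ}

open Classical in
noncomputable def typeLit (ρ : Set τ) (P : τ) (x : ℕ) : FO τ :=
  if P ∈ ρ then FO.pos P x else FO.npos P x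

noncomputable def typeFml [Fintype τ] (ρ : Set τ) (x : ℕ) : FO τ :=
  (Finset.univ : Finset τ).toList.foldr (fun P acc => FO.and (typeLit ρ P x) acc) (FO.eq x x)

open Classical in
noncomputable def negTypeLit (ρ : Set τ) (P : τ) (x : ℕ) : FO τ :=
  if P ∈ ρ then FO.npos P x else FO.pos P x

noncomputable def negTypeFml [Fintype τ] (ρ : Set τ) (x : ℕ) : FO τ :=
  (Finset.univ : Finset τ).toList.foldr (fun P acc => FO.or (negTypeLit ρ P x) acc) (FO.ne x x)

noncomputable def blockFml [Fintype τ] (ρ : Set τ) (i : ℕ) : FO τ :=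
  (List.range i).foldr (fun y acc => FO.and (FO.ne i y) acc) (typeFml ρ i)

noncomputable def negBlockFml [Fintype τ] (ρ : Set τ) (i : ℕ) : FO τ :=
  (List.range i).foldr (fun y acc => FO.or (FO.eq i y) acc) (negTypeFml ρ i)

noncomputable def atLpos [Fintype τ] (ρ : Set τ) : ℕ → ℕ → FO τ
  | 0, i => FO.ex i (blockFml ρ i)
  | (j+1), i => FO.ex i (FO.and (blockFml ρ i) (atLpos ρ j (i+1)))

noncomputable def atM [Fintype τ] (ρ : Set τ) : ℕ → ℕ → FO τ
  | 0, i => FO.all i (negBlockFml ρ i)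
  | (c+1), i => FO.all i (FO.or (negBlockFml ρ i) (atM ρ c (i+1)))

def trueFml : FO τ := FO.all 0 (FO.eq 0 0)

lemma sat_trueFml (M : UModel τ n) (s : ℕ → Fin n) : FO.sat M s trueFml := fun _ => rfl

lemma sat_foldr_and {α : Type*} (M : UModel τ n) (s : ℕ → Fin n) (l : List α)
    (f : α → FO τ) (base : FO τ) :
    FO.sat M s (l.foldr (fun a acc => FO.and (f a) acc) base) ↔
      (∀ a ∈ l, FO.sat M s (f a)) ∧ FO.sat M s base := by
  induction l with
  | nil => simp
  | cons a l ih =>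
      simp only [List.foldr_cons, List.mem_cons]
      constructor
      · rintro ⟨h1, h2⟩
        rw [ih] at h2
        exact ⟨fun b hb => hb.elim (fun h => h ▸ h1) (fun h => h2.1 b h), h2.2⟩
      · rintro ⟨h1, h2⟩
        exact ⟨h1 a (Or.inl rfl), ih.2 ⟨fun b hb => h1 b (Or.inr hb), h2⟩⟩

lemma sat_foldr_or {α : Type*} (M : UModel τ n) (s : ℕ → Fin n) (l : List α)
    (f : α → FO τ) (base : FO τ) :
    FO.sat M s (l.foldr (fun a acc => FO.or (f a) acc) base) ↔
      (∃ a ∈ l, FO.sat M s (f a)) ∨ FO.sat M s base := by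
  induction l with
  | nil => simp
  | cons a l ih =>
      simp only [List.foldr_cons, List.mem_cons]
      constructor
      · rintro (h | h)
        · exact Or.inl ⟨a, Or.inl rfl, h⟩
        · rcases ih.1 h with ⟨b, hb, h2⟩ | h2
          · exact Or.inl ⟨b, Or.inr hb, h2⟩
          · exact Or.inr h2
      · rintro (⟨b, (rfl | hb), h2⟩ | h2)
        · exact Or.inl h2
        · exact Or.inr (ih.2 (Or.inl ⟨b, hb, h2⟩))
        · exact Or.inr (ih.2 (Or.inr h2))

lemma sat_typeLit (M : UModel τ n) (s : ℕ → Fin n) (ρ : Set τ) (P : τ) (x : ℕ) :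
    FO.sat M s (typeLit ρ P x) ↔ (P ∈ M (s x) ↔ P ∈ ρ) := by
  classical
  rw [typeLit]
  by_cases h : P ∈ ρ <;> simp [h, FO.sat]

lemma sat_negTypeLit (M : UModel τ n) (s : ℕ → Fin n) (ρ : Set τ) (P : τ) (x : ℕ) :
    FO.sat M s (negTypeLit ρ P x) ↔ ¬(P ∈ M (s x) ↔ P ∈ ρ) := by
  classical
  rw [negTypeLit]
  by_cases h : P ∈ ρ <;> simp [h, FO.sat]

lemma sat_typeFml [Fintype τ] (M : UModel τ n) (s : ℕ → Fin n) (ρ : Set τ) (x : ℕ) :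
    FO.sat M s (typeFml ρ x) ↔ M (s x) = ρ := by
  rw [typeFml, sat_foldr_and]
  constructor
  · rintro ⟨h, -⟩
    ext P
    exact (sat_typeLit M s ρ P x).1 (h P (by simp))
  · intro h
    refine ⟨fun P _ => (sat_typeLit M s ρ P x).2 (by rw [h]), ?_⟩
    exact rfl

lemma sat_negTypeFml [Fintype τ] (M : UModel τ n) (s : ℕ → Fin n) (ρ : Set τ) (x : ℕ) :
    FO.sat M s (negTypeFml ρ x) ↔ M (s x) ≠ ρ := by
  rw [negTypeFml, sat_foldr_or]
  constructor
  · rintro (⟨P, -, hP⟩ | h)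
    · intro hMρ
      exact (sat_negTypeLit M s ρ P x).1 hP (by rw [hMρ])
    · exact absurd rfl h
  · intro h
    left
    have : ¬ ∀ P, (P ∈ M (s x) ↔ P ∈ ρ) := fun hc => h (Set.ext hc)
    obtain ⟨P, hP⟩ := not_forall.1 this
    exact ⟨P, by simp, (sat_negTypeLit M s ρ P x).2 hP⟩

lemma sat_blockFml [Fintype τ] (M : UModel τ n) (s : ℕ → Fin n) (ρ : Set τ) (i : ℕ) :
    FO.sat M s (blockFml ρ i) ↔ (M (s i) = ρ ∧ ∀ y < i, s i ≠ s y) := by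
  rw [blockFml, sat_foldr_and, sat_typeFml]
  constructor
  · rintro ⟨h1, h2⟩
    exact ⟨h2, fun y hy => h1 y (List.mem_range.2 hy)⟩
  · rintro ⟨h1, h2⟩
    exact ⟨fun y hy => h2 y (List.mem_range.1 hy), h1⟩

lemma sat_negBlockFml [Fintype τ] (M : UModel τ n) (s : ℕ → Fin n) (ρ : Set τ) (i : ℕ) :
    FO.sat M s (negBlockFml ρ i) ↔ (M (s i) ≠ ρ ∨ ∃ y < i, s i = s y) := by
  rw [negBlockFml, sat_foldr_or, sat_negTypeFml]
  constructor
  · rintro (⟨y, hy, h⟩ | h)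
    · exact Or.inr ⟨y, List.mem_range.1 hy, h⟩
    · exact Or.inl h
  · rintro (h | ⟨y, hy, h⟩)
    · exact Or.inr h
    · exact Or.inl ⟨y, List.mem_range.2 hy, h⟩

/-- The elements of type `ρ` avoiding the values of the variables `< i`. -/
def Dset (M : UModel τ n) (s : ℕ → Fin n) (i : ℕ) (ρ : Set τ) : Set (Fin n) :=
  {b | M b = ρ ∧ ∀ y < i, b ≠ s y}

lemma Dset_zero (M : UModel τ n) (s : ℕ → Fin n) (ρ : Set τ) :
    Dset M s 0 ρ = {b | M b = ρ} := by
  ext b; simp [Dset]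

lemma Dset_update (M : UModel τ n) (s : ℕ → Fin n) (i : ℕ) (ρ : Set τ) (a : Fin n) :
    Dset M (Function.update s i a) (i + 1) ρ = Dset M s i ρ \ {a} := by
  ext b
  simp only [Dset, Set.mem_setOf_eq, Set.mem_diff, Set.mem_singleton_iff]
  constructor
  · rintro ⟨h1, h2⟩
    refine ⟨⟨h1, fun y hy => ?_⟩, ?_⟩
    · have := h2 y (by omega)
      rwa [Function.update_of_ne (by omega)] at this
    · have := h2 i (by omega)
      rwa [Function.update_self] at this
  · rintro ⟨⟨h1, h2⟩, h3⟩
    refine ⟨h1, fun y hy => ?_⟩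
    by_cases hyi : y = i
    · subst hyi; rwa [Function.update_self]
    · rw [Function.update_of_ne hyi]
      exact h2 y (by omega)

lemma mem_Dset_iff_block [Fintype τ] (M : UModel τ n) (s : ℕ → Fin n) (i : ℕ) (ρ : Set τ) (a : Fin n) :
    FO.sat M (Function.update s i a) (blockFml ρ i) ↔ a ∈ Dset M s i ρ := by
  rw [sat_blockFml]
  simp only [Function.update_self, Dset, Set.mem_setOf_eq]
  constructor
  · rintro ⟨h1, h2⟩
    refine ⟨h1, fun y hy => ?_⟩
    have := h2 y hy
    rwa [Function.update_of_ne (by omega)] at this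
  · rintro ⟨h1, h2⟩
    refine ⟨h1, fun y hy => ?_⟩
    rw [Function.update_of_ne (by omega)]
    exact h2 y hy

lemma sat_atLpos [Fintype τ] (M : UModel τ n) (ρ : Set τ) :
    ∀ (j i : ℕ) (s : ℕ → Fin n),
      FO.sat M s (atLpos ρ j i) ↔ j + 1 ≤ (Dset M s i ρ).ncard := by
  intro j
  induction j with
  | zero =>
      intro i s
      rw [atLpos]
      constructor
      · rintro ⟨a, ha⟩
        have := (mem_Dset_iff_block M s i ρ a).1 ha
        have hpos : 0 < (Dset M s i ρ).ncard :=
          (Set.ncard_pos (Set.toFinite _)).2 ⟨a, this⟩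
        omega
      · intro h
        obtain ⟨a, ha⟩ := Set.nonempty_of_ncard_ne_zero (s := Dset M s i ρ) (by omega)
        exact ⟨a, (mem_Dset_iff_block M s i ρ a).2 ha⟩
  | succ j ih =>
      intro i s
      rw [atLpos]
      constructor
      · rintro ⟨a, ha1, ha2⟩
        have hmem := (mem_Dset_iff_block M s i ρ a).1 ha1
        have := (ih (i+1) (Function.update s i a)).1 ha2
        rw [Dset_update, Set.ncard_diff_singleton_of_mem hmem] at this
        have hpos : 0 < (Dset M s i ρ).ncard :=
          (Set.ncard_pos (Set.toFinite _)).2 ⟨a, hmem⟩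
        omega
      · intro h
        obtain ⟨a, ha⟩ := Set.nonempty_of_ncard_ne_zero (s := Dset M s i ρ) (by omega)
        refine ⟨a, (mem_Dset_iff_block M s i ρ a).2 ha, ?_⟩
        rw [ih (i+1) (Function.update s i a), Dset_update,
          Set.ncard_diff_singleton_of_mem ha]
        omega

lemma not_mem_Dset_iff_negblock [Fintype τ] (M : UModel τ n) (s : ℕ → Fin n) (i : ℕ)
    (ρ : Set τ) (a : Fin n) :
    FO.sat M (Function.update s i a) (negBlockFml ρ i) ↔ a ∉ Dset M s i ρ := by
  rw [sat_negBlockFml]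
  simp only [Function.update_self, Dset, Set.mem_setOf_eq, not_and, not_forall]
  constructor
  · rintro (h | ⟨y, hy, h⟩)
    · intro hM; exact absurd hM h
    · intro _
      refine ⟨y, hy, ?_⟩
      rw [Function.update_of_ne (by omega)] at h
      simpa using h
  · intro h
    by_cases hM : M a = ρ
    · obtain ⟨y, hy, hne⟩ := h hM
      refine Or.inr ⟨y, hy, ?_⟩
      rw [Function.update_of_ne (by omega)]
      simpa using hne
    · exact Or.inl hM

lemma sat_atM [Fintype τ] (M : UModel τ n) (ρ : Set τ) :
    ∀ (c i : ℕ) (s : ℕ → Fin n),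
      FO.sat M s (atM ρ c i) ↔ (Dset M s i ρ).ncard ≤ c := by
  intro c
  induction c with
  | zero =>
      intro i s
      rw [atM]
      constructor
      · intro h
        have : Dset M s i ρ = ∅ := by
          by_contra hne
          obtain ⟨a, ha⟩ := Set.nonempty_iff_ne_empty.2 hne
          exact (not_mem_Dset_iff_negblock M s i ρ a).1 (h a) ha
        rw [this]
        simp
      · intro h a
        refine (not_mem_Dset_iff_negblock M s i ρ a).2 ?_
        intro ha
        have : 0 < (Dset M s i ρ).ncard := (Set.ncard_pos (Set.toFinite _)).2 ⟨a, ha⟩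
        omega
  | succ c ih =>
      intro i s
      rw [atM]
      constructor
      · intro h
        by_contra hc
        push_neg at hc
        obtain ⟨a, ha⟩ := Set.nonempty_of_ncard_ne_zero (s := Dset M s i ρ) (by omega)
        rcases h a with h1 | h1
        · exact (not_mem_Dset_iff_negblock M s i ρ a).1 h1 ha
        · have := (ih (i+1) (Function.update s i a)).1 h1
          rw [Dset_update, Set.ncard_diff_singleton_of_mem ha] at this
          omega
      · intro h a
        by_cases ha : a ∈ Dset M s i ρ
        · refine Or.inr ?_
          rw [ih (i+1) (Function.update s i a), Dset_update,
            Set.ncard_diff_singleton_of_mem ha]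
          omega
        · exact Or.inl ((not_mem_Dset_iff_negblock M s i ρ a).2 ha)

end CountFml
section PhiM

variable {τ : Type} {n : ℕ}

lemma qrank_foldr_and_le {α : Type*} (l : List α) (f : α → FO τ) (base : FO τ) (k : ℕ)
    (hf : ∀ a ∈ l, (f a).qrank ≤ k) (hb : base.qrank ≤ k) :
    (l.foldr (fun a acc => FO.and (f a) acc) base).qrank ≤ k := by
  induction l with
  | nil => exact hb
  | cons a l ih =>
      simp only [List.foldr_cons, FO.qrank, max_le_iff]
      exact ⟨hf a (by simp), ih (fun b hb' => hf b (by simp [hb']))⟩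

lemma qrank_foldr_or_le {α : Type*} (l : List α) (f : α → FO τ) (base : FO τ) (k : ℕ)
    (hf : ∀ a ∈ l, (f a).qrank ≤ k) (hb : base.qrank ≤ k) :
    (l.foldr (fun a acc => FO.or (f a) acc) base).qrank ≤ k := by
  induction l with
  | nil => exact hb
  | cons a l ih =>
      simp only [List.foldr_cons, FO.qrank, max_le_iff]
      exact ⟨hf a (by simp), ih (fun b hb' => hf b (by simp [hb']))⟩

lemma qrank_typeLit (ρ : Set τ) (P : τ) (x : ℕ) : (typeLit ρ P x).qrank = 0 := by
  rw [typeLit]; split <;> rfl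

lemma qrank_negTypeLit (ρ : Set τ) (P : τ) (x : ℕ) : (negTypeLit ρ P x).qrank = 0 := by
  rw [negTypeLit]; split <;> rfl

lemma qrank_blockFml [Fintype τ] (ρ : Set τ) (i : ℕ) : (blockFml ρ i).qrank ≤ 0 := by
  refine qrank_foldr_and_le _ _ _ 0 (fun y _ => le_refl 0) ?_
  exact qrank_foldr_and_le _ _ _ 0 (fun P _ => (qrank_typeLit ρ P i).le) (le_refl 0)

lemma qrank_negBlockFml [Fintype τ] (ρ : Set τ) (i : ℕ) : (negBlockFml ρ i).qrank ≤ 0 := by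
  refine qrank_foldr_or_le _ _ _ 0 (fun y _ => le_refl 0) ?_
  exact qrank_foldr_or_le _ _ _ 0 (fun P _ => (qrank_negTypeLit ρ P i).le) (le_refl 0)

lemma qrank_atLpos [Fintype τ] (ρ : Set τ) : ∀ (j i : ℕ), (atLpos ρ j i).qrank ≤ j + 1 := by
  intro j
  induction j with
  | zero =>
      intro i
      rw [atLpos]
      simp only [FO.qrank]
      have := qrank_blockFml ρ i
      omega
  | succ j ih =>
      intro i
      rw [atLpos]
      simp only [FO.qrank]
      have h1 := qrank_blockFml ρ i
      have h2 := ih (i + 1)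
      omega

lemma qrank_atM [Fintype τ] (ρ : Set τ) : ∀ (c i : ℕ), (atM ρ c i).qrank ≤ c + 1 := by
  intro c
  induction c with
  | zero =>
      intro i
      rw [atM]
      simp only [FO.qrank]
      have := qrank_negBlockFml ρ i
      omega
  | succ c ih =>
      intro i
      rw [atM]
      simp only [FO.qrank]
      have h1 := qrank_negBlockFml ρ i
      have h2 := ih (i + 1)
      omega

lemma qrank_trueFml : (trueFml : FO τ).qrank = 1 := rfl

lemma freeVars_foldr_and {α : Type*} (l : List α) (f : α → FO τ) (base : FO τ) (S : Finset ℕ)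
    (hf : ∀ a ∈ l, (f a).freeVars ⊆ S) (hb : base.freeVars ⊆ S) :
    (l.foldr (fun a acc => FO.and (f a) acc) base).freeVars ⊆ S := by
  induction l with
  | nil => exact hb
  | cons a l ih =>
      simp only [List.foldr_cons, FO.freeVars]
      exact Finset.union_subset (hf a (by simp)) (ih (fun b hb' => hf b (by simp [hb'])))

lemma freeVars_foldr_or {α : Type*} (l : List α) (f : α → FO τ) (base : FO τ) (S : Finset ℕ)
    (hf : ∀ a ∈ l, (f a).freeVars ⊆ S) (hb : base.freeVars ⊆ S) :
    (l.foldr (fun a acc => FO.or (f a) acc) base).freeVars ⊆ S := by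
  induction l with
  | nil => exact hb
  | cons a l ih =>
      simp only [List.foldr_cons, FO.freeVars]
      exact Finset.union_subset (hf a (by simp)) (ih (fun b hb' => hf b (by simp [hb'])))

lemma freeVars_typeLit (ρ : Set τ) (P : τ) (x : ℕ) : (typeLit ρ P x).freeVars ⊆ {x} := by
  rw [typeLit]; split <;> simp [FO.freeVars]

lemma freeVars_negTypeLit (ρ : Set τ) (P : τ) (x : ℕ) : (negTypeLit ρ P x).freeVars ⊆ {x} := by
  rw [negTypeLit]; split <;> simp [FO.freeVars]

lemma freeVars_blockFml [Fintype τ] (ρ : Set τ) (i : ℕ) :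
    (blockFml ρ i).freeVars ⊆ Finset.range (i + 1) := by
  refine freeVars_foldr_and _ _ _ _ (fun y hy => ?_) ?_
  · intro z hz
    simp only [FO.freeVars, Finset.mem_insert, Finset.mem_singleton] at hz
    rw [List.mem_range] at hy
    rcases hz with rfl | rfl <;> simp [Finset.mem_range] <;> omega
  · refine (freeVars_foldr_and _ _ _ {i} (fun P _ => freeVars_typeLit ρ P i)
      (by simp [FO.freeVars])).trans ?_
    intro z hz
    simp only [Finset.mem_singleton] at hz
    simp [hz, Finset.mem_range]

lemma freeVars_negBlockFml [Fintype τ] (ρ : Set τ) (i : ℕ) :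
    (negBlockFml ρ i).freeVars ⊆ Finset.range (i + 1) := by
  refine freeVars_foldr_or _ _ _ _ (fun y hy => ?_) ?_
  · intro z hz
    simp only [FO.freeVars, Finset.mem_insert, Finset.mem_singleton] at hz
    rw [List.mem_range] at hy
    rcases hz with rfl | rfl <;> simp [Finset.mem_range] <;> omega
  · refine (freeVars_foldr_or _ _ _ {i} (fun P _ => freeVars_negTypeLit ρ P i)
      (by simp [FO.freeVars])).trans ?_
    intro z hz
    simp only [Finset.mem_singleton] at hz
    simp [hz, Finset.mem_range]

lemma range_succ_sdiff (i : ℕ) : Finset.range (i + 1) \ {i} ⊆ Finset.range i := by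
  intro z hz
  rw [Finset.mem_sdiff, Finset.mem_range, Finset.mem_singleton] at hz
  rw [Finset.mem_range]
  omega

lemma freeVars_atLpos [Fintype τ] (ρ : Set τ) : ∀ (j i : ℕ),
    (atLpos ρ j i).freeVars ⊆ Finset.range i := by
  intro j
  induction j with
  | zero =>
      intro i
      rw [atLpos]
      refine (Finset.sdiff_subset_sdiff (freeVars_blockFml ρ i) (le_refl _)).trans
        (range_succ_sdiff i)
  | succ j ih =>
      intro i
      rw [atLpos]
      show ((blockFml ρ i).freeVars ∪ (atLpos ρ j (i+1)).freeVars) \ {i} ⊆ Finset.range i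
      refine (Finset.sdiff_subset_sdiff (Finset.union_subset (freeVars_blockFml ρ i)
        ((ih (i+1)).trans (le_refl _))) (le_refl _)).trans (range_succ_sdiff i)

lemma freeVars_atM [Fintype τ] (ρ : Set τ) : ∀ (c i : ℕ),
    (atM ρ c i).freeVars ⊆ Finset.range i := by
  intro c
  induction c with
  | zero =>
      intro i
      rw [atM]
      refine (Finset.sdiff_subset_sdiff (freeVars_negBlockFml ρ i) (le_refl _)).trans
        (range_succ_sdiff i)
  | succ c ih =>
      intro i
      rw [atM]
      show ((negBlockFml ρ i).freeVars ∪ (atM ρ c (i+1)).freeVars) \ {i} ⊆ Finset.range i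
      refine (Finset.sdiff_subset_sdiff (Finset.union_subset (freeVars_negBlockFml ρ i)
        ((ih (i+1)).trans (le_refl _))) (le_refl _)).trans (range_succ_sdiff i)

lemma freeVars_trueFml : (trueFml : FO τ).freeVars = ∅ := by
  simp [trueFml, FO.freeVars]

/-- One clause: the type `ρ` is realized at least `m` times, and if `m < d`, at most `m` times. -/
noncomputable def countClause [Fintype τ] (ρ : Set τ) (m d : ℕ) : FO τ :=
  FO.and (if m = 0 then trueFml else atLpos ρ (m - 1) 0)
         (if m < d then atM ρ m 0 else trueFml)

lemma ncard_Dset_zero (M : UModel τ n) (s : ℕ → Fin n) (ρ : Set τ) :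
    (Dset M s 0 ρ).ncard = typeCount M ρ := by
  rw [Dset_zero]; rfl

lemma sat_countClause [Fintype τ] (M : UModel τ n) (s : ℕ → Fin n) (ρ : Set τ) (m d : ℕ) :
    FO.sat M s (countClause ρ m d) ↔
      (m ≤ typeCount M ρ ∧ (m < d → typeCount M ρ ≤ m)) := by
  rw [countClause]
  have h1 : FO.sat M s (if m = 0 then trueFml else atLpos ρ (m - 1) 0) ↔ m ≤ typeCount M ρ := by
    split
    · rename_i h; subst h; simp [sat_trueFml]
    · rename_i h
      rw [sat_atLpos, ncard_Dset_zero]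
      omega
  have h2 : FO.sat M s (if m < d then atM ρ m 0 else trueFml) ↔
      (m < d → typeCount M ρ ≤ m) := by
    split
    · rename_i h
      rw [sat_atM, ncard_Dset_zero]
      exact ⟨fun hh _ => hh, fun hh => hh h⟩
    · rename_i h
      simp [sat_trueFml, h]
  show FO.sat M s _ ∧ FO.sat M s _ ↔ _
  rw [h1, h2]

lemma qrank_countClause [Fintype τ] (ρ : Set τ) (m d : ℕ) (hd : 1 ≤ d) (hmd : m ≤ d) :
    (countClause ρ m d).qrank ≤ d := by
  rw [countClause]
  show max _ _ ≤ d
  refine max_le ?_ ?_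
  · split
    · rw [qrank_trueFml]; omega
    · rename_i h
      have := qrank_atLpos ρ (m - 1) 0
      omega
  · split
    · rename_i h
      have := qrank_atM ρ m 0
      omega
    · rw [qrank_trueFml]; omega

lemma freeVars_countClause [Fintype τ] (ρ : Set τ) (m d : ℕ) :
    (countClause ρ m d).freeVars = ∅ := by
  rw [countClause]
  show (_ ∪ _ : Finset ℕ) = ∅
  rw [Finset.union_eq_empty]
  constructor
  · split
    · exact freeVars_trueFml
    · have := freeVars_atLpos ρ (m - 1) 0
      simpa using Finset.subset_empty.1 (by simpa using this)
  · split
    · have := freeVars_atM ρ m 0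
      simpa using Finset.subset_empty.1 (by simpa using this)
    · exact freeVars_trueFml

/-- The defining sentence of the `≡_d` class. -/
noncomputable def phiM [Fintype τ] {t : ℕ} (π : Fin t → Set τ) (m : Fin t → ℕ) (d : ℕ) : FO τ :=
  (List.finRange t).foldr (fun i acc => FO.and (countClause (π i) (m i) d) acc) trueFml

lemma sat_phiM [Fintype τ] {t : ℕ} (π : Fin t → Set τ) (m : Fin t → ℕ) (d : ℕ)
    (M : UModel τ n) (s : ℕ → Fin n) :
    FO.sat M s (phiM π m d) ↔
      ∀ i : Fin t, (m i ≤ typeCount M (π i) ∧ (m i < d → typeCount M (π i) ≤ m i)) := by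
  rw [phiM, sat_foldr_and]
  constructor
  · rintro ⟨h, -⟩ i
    exact (sat_countClause M s (π i) (m i) d).1 (h i (List.mem_finRange i))
  · intro h
    exact ⟨fun i _ => (sat_countClause M s (π i) (m i) d).2 (h i), sat_trueFml M s⟩

lemma qrank_phiM [Fintype τ] {t : ℕ} (π : Fin t → Set τ) (m : Fin t → ℕ) (d : ℕ)
    (hd : 1 ≤ d) (hmd : ∀ i, m i ≤ d) : (phiM π m d).qrank ≤ d := by
  rw [phiM]
  refine qrank_foldr_and_le _ _ _ d (fun i _ => qrank_countClause (π i) (m i) d hd (hmd i)) ?_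
  rw [qrank_trueFml]; omega

lemma isSentence_phiM [Fintype τ] {t : ℕ} (π : Fin t → Set τ) (m : Fin t → ℕ) (d : ℕ) :
    (phiM π m d).IsSentence := by
  rw [FO.IsSentence, phiM]
  refine Finset.subset_empty.1 (freeVars_foldr_and _ _ _ ∅ (fun i _ => ?_) ?_)
  · rw [freeVars_countClause]
  · rw [freeVars_trueFml]

lemma definesD_phiM [Fintype τ] {t : ℕ} (π : Fin t → Set τ) (hsurj : Function.Surjective π)
    (m : Fin t → ℕ) (d : ℕ) (M : UModel τ n)
    (hm : ∀ i, m i = min (typeCount M (π i)) d) :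
    DefinesD d (phiM π m d) M := by
  intro M'
  have key : ∀ s : ℕ → Fin n, FO.sat M' s (phiM π m d) ↔ EquivD d M' M := by
    intro s
    rw [sat_phiM]
    constructor
    · intro h ρ
      obtain ⟨i, rfl⟩ := hsurj ρ
      have hi := h i
      have hmi := hm i
      omega
    · intro h i
      have := h (π i)
      have hmi := hm i
      omega
  constructor
  · intro hsat
    by_cases hn : Nonempty (Fin n)
    · obtain ⟨a⟩ := hn
      exact (key (fun _ => a)).1 (hsat (fun _ => a))
    · intro ρ
      have h1 : {a : Fin n | M' a = ρ} = ∅ := by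
        ext a; exact absurd ⟨a⟩ hn
      have h2 : {a : Fin n | M a = ρ} = ∅ := by
        ext a; exact absurd ⟨a⟩ hn
      rw [typeCount, typeCount, h1, h2]
  · intro hEq s
    exact (key s).2 hEq

end PhiM
/-- Let the `≡_d`-class of the size-`n` model `M` correspond to the
ascending tuple `m = (m₁,…,m_t)`, `t = 2^{|τ|} ≥ 2`, where `m i = min(|π i|_M, d)` for an
enumeration `π` of all `τ`-types. Then every FO[τ] sentence true exactly in the size-`n`
models `≡_d`-equivalent to `M` has size at least `3·m_{t-1} − 3`; in particular
`C_d(M) ≥ 3·m_{t-1} − 3`. -/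
theorem descCompD_lower_bound (τ : Type) [Fintype τ] {n d : ℕ} (hd : 1 ≤ d)
    (M : UModel τ n)
    {t : ℕ} (ht : t = 2 ^ Fintype.card τ) (ht2 : 2 ≤ t)
    (π : Fin t → Set τ) (hbij : Function.Bijective π)
    (m : Fin t → ℕ) (hm : ∀ i, m i = min (typeCount M (π i)) d)
    (hasc : Monotone m) :
    (∀ φ : FO τ, φ.IsSentence → DefinesD d φ M →
        3 * m ⟨t - 2, by omega⟩ - 3 ≤ φ.size) ∧
      3 * m ⟨t - 2, by omega⟩ - 3 ≤ descCompD d M := by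
  have hlt : t - 2 < t := by omega
  suffices h : (∀ φ : FO τ, φ.IsSentence → DefinesD d φ M →
        3 * m ⟨t - 2, hlt⟩ - 3 ≤ φ.size) ∧
      3 * m ⟨t - 2, hlt⟩ - 3 ≤ descCompD d M by exact h
  set i₁ : Fin t := ⟨t - 2, hlt⟩ with hi₁
  set i₂ : Fin t := ⟨t - 1, by omega⟩ with hi₂
  have core : ∀ φ : FO τ, φ.IsSentence → DefinesD d φ M →
      3 * m i₁ - 3 ≤ φ.size := by
    intro φ hsent hdef
    by_cases hk1 : m i₁ ≤ 1
    · omega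
    push_neg at hk1
    set k := m i₁ with hk
    have hne : π i₁ ≠ π i₂ := by
      intro h
      have h12 : i₁ = i₂ := hbij.1 h
      rw [hi₁, hi₂, Fin.mk.injEq] at h12
      omega
    have hmin1 : min (typeCount M (π i₁)) d = k := (hm i₁).symm
    have htc1 : k ≤ typeCount M (π i₁) := by omega
    have hkd : k ≤ d := by omega
    have hle : m i₁ ≤ m i₂ := hasc (by rw [hi₁, hi₂, Fin.mk_le_mk]; omega)
    have hmin2 : min (typeCount M (π i₂)) d = m i₂ := (hm i₂).symm
    have htc2 : k - 1 ≤ typeCount M (π i₂) := by omega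
    obtain ⟨M₂, hA, hB, hC⟩ := retype M (π i₁) (π i₂) hne (k - 1) (by omega)
    have hnotEq : ¬ EquivD d M₂ M := by
      intro h
      have := h (π i₁)
      rw [hA] at this
      omega
    have hEqq : ∀ ρ, min (typeCount M₂ ρ) (k - 1) = min (typeCount M ρ) (k - 1) := by
      intro ρ
      by_cases h1 : ρ = π i₁
      · subst h1; rw [hA]; omega
      by_cases h2 : ρ = π i₂
      · subst h2; rw [hB]; omega
      rw [hC ρ h1 h2]
    have hSatM : Sat M φ := (hdef M).2 (fun ρ => rfl)
    have hnotSat : ¬ Sat M₂ φ := fun h => hnotEq ((hdef M₂).1 h)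
    have hfv : φ.freeVars = ∅ := hsent
    have hq : k ≤ φ.qrank := by
      by_contra hq
      push_neg at hq
      apply hnotSat
      intro s
      refine transferQ M M₂ (k - 1) (fun ρ => (hEqq ρ).symm) φ s s ?_ ?_ ?_ (hSatM s)
      · rw [hfv]; simp; omega
      · rw [hfv]; simp
      · rw [hfv]; simp
    have ha : k - 1 ≤ φ.acount := by
      by_contra ha
      push_neg at ha
      apply hnotSat
      intro s
      refine transferA M M₂ (k - 1) (fun ρ => (hEqq ρ).symm) φ (by omega) s s ?_ ?_ (hSatM s)
      · rw [hfv]; simp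
      · intro y hy
        exfalso
        have := φ.eqFreeVars_subset_freeVars hy
        rw [hfv] at this
        simp at this
    have hqc := φ.qrank_le_qcount
    have hsz := φ.size_id
    omega
  refine ⟨core, ?_⟩
  have hmd : ∀ i, m i ≤ d := fun i => by have := hm i; omega
  refine le_csInf ⟨(phiM π m d).size, phiM π m d, isSentence_phiM π m d,
    qrank_phiM π m d hd hmd, definesD_phiM π hbij.2 m d M hm, rfl⟩ ?_
  rintro b ⟨φ, hs, hq, hdef, rfl⟩
  exact core φ hs hdef
end

section
/- Let τ be a finite monadic vocabulary and let (M_n)_{n ∈ ℤ₊} be any sequence where M_n is a τ-model of size n. Then H_S(M_n) − (1/n)·H_B(M_n) → 0 as n → ∞; in particular the Shannon entropy H_S(M_n) and the normalized Boltzmann entropy (1/n)·H_B(M_n) are asymptotically equivalent. -/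
/-!
Common definitions: unary (monadic) first-order structures, FO[τ] formulas in
negation normal form, formula size / quantifier rank / number of quantifiers,
semantics, description complexity, the equivalence `≡_d`, and the entropies.
-/

open Filter

namespace SB

open Equiv

variable {τ : Type} {n : ℕ}

lemma typeCount_eq_natCard (M : UModel τ n) (π : Set τ) :
    typeCount M π = Nat.card {a : Fin n // M a = π} := by
  rw [typeCount, ← Nat.card_coe_set_eq]
  rfl

/-- restriction of a type-preserving permutation to a fiber -/
def restrictPerm (M : UModel τ n) (σ : Equiv.Perm (Fin n)) (h : ∀ a, M (σ a) = M a)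
    (s : Set τ) : Equiv.Perm {a : Fin n // M a = s} where
  toFun x := ⟨σ x, by rw [h]; exact x.2⟩
  invFun x := ⟨σ.symm x, by
    have := h (σ.symm x)
    rw [σ.apply_symm_apply] at this
    rw [← this]; exact x.2⟩
  left_inv x := Subtype.ext (σ.symm_apply_apply x)
  right_inv x := Subtype.ext (σ.apply_symm_apply x)

/-- gluing fiberwise permutations -/
def gluePerm (M : UModel τ n) (f : ∀ s : Set τ, Equiv.Perm {a : Fin n // M a = s}) :
    Equiv.Perm (Fin n) :=
  (Equiv.sigmaFiberEquiv M).symm.trans ((Equiv.sigmaCongrRight f).trans (Equiv.sigmaFiberEquiv M))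

lemma gluePerm_apply (M : UModel τ n) (f : ∀ s : Set τ, Equiv.Perm {a : Fin n // M a = s})
    (a : Fin n) : gluePerm M f a = (f (M a) ⟨a, rfl⟩ : {x : Fin n // M x = M a}).1 := rfl

lemma M_gluePerm (M : UModel τ n) (f : ∀ s : Set τ, Equiv.Perm {a : Fin n // M a = s})
    (a : Fin n) : M (gluePerm M f a) = M a := (f (M a) ⟨a, rfl⟩).2

/-- the stabilizer-like subtype is equivalent to the product of fiber permutation groups -/
noncomputable def stabEquiv (M : UModel τ n) :
    {σ : Equiv.Perm (Fin n) // ∀ a, M (σ a) = M a} ≃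
      ∀ s : Set τ, Equiv.Perm {a : Fin n // M a = s} where
  toFun σ s := restrictPerm M σ.1 σ.2 s
  invFun f := ⟨gluePerm M f, M_gluePerm M f⟩
  left_inv σ := Subtype.ext (Equiv.ext fun a => rfl)
  right_inv f := by
    funext s
    apply Equiv.ext
    rintro ⟨a, rfl⟩
    apply Subtype.ext
    rfl

/-- gluing fiberwise equivalences between two models -/
noncomputable def glueEquiv (M M' : UModel τ n)
    (e : ∀ s : Set τ, {a : Fin n // M' a = s} ≃ {a : Fin n // M a = s}) :
    Equiv.Perm (Fin n) :=
  (Equiv.sigmaFiberEquiv M').symm.trans ((Equiv.sigmaCongrRight e).trans (Equiv.sigmaFiberEquiv M))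

lemma M_glueEquiv (M M' : UModel τ n)
    (e : ∀ s : Set τ, {a : Fin n // M' a = s} ≃ {a : Fin n // M a = s}) (a : Fin n) :
    M (glueEquiv M M' e a) = M' a := (e (M' a) ⟨a, rfl⟩).2

lemma typeCount_comp (M : UModel τ n) (σ : Equiv.Perm (Fin n)) (π : Set τ) :
    typeCount (M ∘ σ) π = typeCount M π := by
  rw [typeCount_eq_natCard, typeCount_eq_natCard]
  exact Nat.card_congr (σ.subtypeEquiv fun a => by simp)

lemma iso_iff (M M' : UModel τ n) :
    Iso M' M ↔ ∃ σ : Equiv.Perm (Fin n), M' = M ∘ σ := by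
  constructor
  · intro h
    classical
    have he : ∀ s : Set τ, Nonempty ({a : Fin n // M' a = s} ≃ {a : Fin n // M a = s}) := by
      intro s
      have := h s
      rw [typeCount_eq_natCard, typeCount_eq_natCard] at this
      exact Finite.card_eq.mp this
    let e : ∀ s : Set τ, {a : Fin n // M' a = s} ≃ {a : Fin n // M a = s} :=
      fun s => (he s).some
    refine ⟨glueEquiv M M' e, ?_⟩
    funext a
    exact (M_glueEquiv M M' e a).symm
  · rintro ⟨σ, rfl⟩
    intro π
    exact typeCount_comp M σ π

end SB

namespace SB2
open SB Equiv

variable {τ : Type} {n : ℕ}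

theorem card_iso_mul [Fintype τ] (M : UModel τ n) :
    Nat.card {M' : UModel τ n // Iso M' M} * ∏ π : Set τ, (typeCount M π).factorial
      = (n).factorial := by
  classical
  letI act : MulAction (Equiv.Perm (Fin n)) (UModel τ n) := arrowAction
  have hsmul : ∀ (σ : Equiv.Perm (Fin n)) (N : UModel τ n), σ • N = N ∘ ⇑σ⁻¹ := fun σ N => rfl
  have horb : {M' : UModel τ n | Iso M' M} = MulAction.orbit (Equiv.Perm (Fin n)) M := by
    ext M'
    simp only [Set.mem_setOf_eq, MulAction.mem_orbit_iff]
    rw [iso_iff]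
    constructor
    · rintro ⟨σ, rfl⟩
      exact ⟨σ⁻¹, by rw [hsmul]; simp⟩
    · rintro ⟨σ, rfl⟩
      exact ⟨σ⁻¹, by rw [hsmul]⟩
  have hstab : Nat.card (MulAction.stabilizer (Equiv.Perm (Fin n)) M)
      = ∏ π : Set τ, (typeCount M π).factorial := by
    have e1 : MulAction.stabilizer (Equiv.Perm (Fin n)) M ≃
        {σ : Equiv.Perm (Fin n) // ∀ a, M (σ a) = M a} := by
      apply Equiv.subtypeEquivRight
      intro σ
      rw [MulAction.mem_stabilizer_iff, hsmul]
      constructor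
      · intro h a
        have := congrFun h (σ a)
        simpa using this.symm
      · intro h
        funext a
        simpa using (h (σ⁻¹ a)).symm
    rw [Nat.card_congr (e1.trans (stabEquiv M)), Nat.card_pi]
    congr 1
    funext s
    haveI : Fintype {a : Fin n // M a = s} := Fintype.ofFinite _
    rw [Nat.card_eq_fintype_card, Fintype.card_perm, typeCount_eq_natCard,
      Nat.card_eq_fintype_card]
  have key := Nat.card_congr (MulAction.orbitProdStabilizerEquivGroup (Equiv.Perm (Fin n)) M)
  rw [Nat.card_prod, hstab] at key
  have h1 : Nat.card {M' : UModel τ n // Iso M' M}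
      = Nat.card (MulAction.orbit (Equiv.Perm (Fin n)) M) :=
    Nat.card_congr (Equiv.setCongr horb)
  rw [h1, key, Nat.card_eq_fintype_card, Fintype.card_perm, Fintype.card_fin]

theorem sum_typeCount [Fintype τ] (M : UModel τ n) :
    ∑ π : Set τ, typeCount M π = n := by
  classical
  have hc : ∀ π : Set τ, typeCount M π = (Finset.univ.filter (fun a => M a = π)).card := by
    intro π
    rw [typeCount, ← Set.ncard_coe_finset]
    congr 1
    ext a
    simp
  have h := Finset.card_eq_sum_card_fiberwise (s := (Finset.univ : Finset (Fin n)))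
    (t := (Finset.univ : Finset (Set τ))) (f := M) (fun a _ => Finset.mem_univ _)
  rw [Finset.card_univ, Fintype.card_fin] at h
  simp_rw [hc]
  exact h.symm

end SB2


lemma log_factorial_bound : ∃ c : ℝ, 0 ≤ c ∧ ∀ m : ℕ,
    |Real.log (m.factorial) - ((m : ℝ) * Real.log m - m)| ≤ c * (Real.log (m + 2) + 1) := by
  obtain ⟨c₀, hc₀⟩ : ∃ c₀ : ℝ, ∀ n : ℕ, c₀ ≤ Real.log (Stirling.stirlingSeq (n + 1)) :=
    ⟨_, Stirling.log_stirlingSeq_bounded_by_constant⟩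
  set C1 : ℝ := max |c₀| |Real.log (Stirling.stirlingSeq 1)| with hC1
  have hC1nn : 0 ≤ C1 := le_trans (abs_nonneg _) (le_max_left _ _)
  refine ⟨C1 + 1, by linarith, ?_⟩
  intro m
  have hlog2 : (0:ℝ) ≤ Real.log ((m:ℝ) + 2) := Real.log_nonneg (by push_cast; linarith)
  cases m with
  | zero =>
    simp only [Nat.factorial_zero, Nat.cast_one, Real.log_one, Nat.cast_zero, Real.log_zero,
      mul_zero, zero_mul, sub_zero, zero_sub, abs_zero, neg_zero]
    norm_num at hlog2 ⊢
    nlinarith [hlog2]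
  | succ m =>
    have hm1 : (0:ℝ) < (m:ℝ) + 1 := by positivity
    have hf := Stirling.log_stirlingSeq_formula (m + 1)
    have hldiv : Real.log (((m:ℝ) + 1) / Real.exp 1) = Real.log ((m:ℝ) + 1) - 1 := by
      rw [Real.log_div (ne_of_gt hm1) (Real.exp_ne_zero 1), Real.log_exp]
    have key : Real.log ((m + 1).factorial) - (((m + 1 : ℕ) : ℝ) * Real.log ((m + 1 : ℕ) : ℝ)
        - ((m + 1 : ℕ) : ℝ)) = Real.log (Stirling.stirlingSeq (m + 1))
        + 1 / 2 * Real.log (2 * ((m:ℝ) + 1)) := by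
      push_cast at hf ⊢
      rw [hf, hldiv]
      ring
    rw [key]
    have hlo := hc₀ m
    have hhi : Real.log (Stirling.stirlingSeq (m + 1)) ≤ Real.log (Stirling.stirlingSeq 1) := by
      simpa using Stirling.log_stirlingSeq'_antitone (Nat.zero_le m)
    have h1 : |Real.log (Stirling.stirlingSeq (m + 1))| ≤ C1 := by
      rw [abs_le]
      refine ⟨?_, ?_⟩
      · have h := neg_abs_le c₀
        have h2 := le_max_left |c₀| |Real.log (Stirling.stirlingSeq 1)|
        linarith
      · have h := le_abs_self (Real.log (Stirling.stirlingSeq 1))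
        have h2 := le_max_right |c₀| |Real.log (Stirling.stirlingSeq 1)|
        linarith
    have h2 : 1 / 2 * Real.log (2 * ((m:ℝ) + 1)) ≤ Real.log ((m:ℝ) + 3) := by
      have hle : (2 * ((m:ℝ) + 1)) ≤ ((m:ℝ) + 3) ^ 2 := by nlinarith [Nat.cast_nonneg (α := ℝ) m]
      have := Real.log_le_log (by positivity) hle
      rw [Real.log_pow] at this
      push_cast at this
      linarith
    have h2nn : 0 ≤ Real.log (2 * ((m:ℝ) + 1)) := Real.log_nonneg (by linarith [Nat.cast_nonneg (α := ℝ) m])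
    have habs : |Real.log (Stirling.stirlingSeq (m + 1)) + 1 / 2 * Real.log (2 * ((m:ℝ) + 1))|
        ≤ C1 + Real.log ((m:ℝ) + 3) := by
      calc _ ≤ |Real.log (Stirling.stirlingSeq (m + 1))| + |1 / 2 * Real.log (2 * ((m:ℝ) + 1))| :=
            abs_add_le _ _
        _ ≤ C1 + Real.log ((m:ℝ) + 3) := by
            have he : |1 / 2 * Real.log (2 * ((m:ℝ) + 1))| = 1 / 2 * Real.log (2 * ((m:ℝ) + 1)) :=
              abs_of_nonneg (by linarith)
            rw [he]
            linarith
    have hcast : ((m + 1 : ℕ) : ℝ) + 2 = (m:ℝ) + 3 := by push_cast; ring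
    rw [hcast]
    have hlog3 : (0:ℝ) ≤ Real.log ((m:ℝ) + 3) := Real.log_nonneg (by linarith [Nat.cast_nonneg (α := ℝ) m])
    nlinarith [habs]


-- helper: typeCount ≤ n
lemma typeCount_le {τ : Type} {n : ℕ} (M : UModel τ n) (π : Set τ) : typeCount M π ≤ n := by
  rw [SB.typeCount_eq_natCard]
  have := Nat.card_le_card_of_injective (fun x : {a : Fin n // M a = π} => x.1)
    Subtype.val_injective
  simpa [Nat.card_eq_fintype_card] using this

theorem shannon_boltzmann_asymptotic' (τ : Type) [Fintype τ]
    (M : (n : ℕ) → UModel τ n) :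
    Filter.Tendsto (fun n : ℕ => HS (M n) - (1 / n) * HB (M n))
      Filter.atTop (nhds 0) := by
  classical
  obtain ⟨c, hc0, hcb⟩ := log_factorial_bound
  set t : ℕ := Fintype.card (Set τ) with htdef
  set l2 : ℝ := Real.log 2 with hl2def
  have hl2 : 0 < l2 := Real.log_pos one_lt_two
  set g : ℕ → ℝ := fun n => ((t : ℝ) + 1) * c / l2 * (Real.log (n + 2) / n + 1 / n) with hgdef
  have main : ∀ n : ℕ, 1 ≤ n → |HS (M n) - (1 / n) * HB (M n)| ≤ g n := by
    intro n hn
    set N := M n with hN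
    set cnt : Set τ → ℕ := fun π => typeCount N π with hcnt
    have hnpos : (0 : ℝ) < n := by exact_mod_cast hn
    set K : ℕ := Nat.card {M' : UModel τ n // Iso M' N} with hKdef
    haveI : Nonempty {M' : UModel τ n // Iso M' N} := ⟨⟨N, fun _ => rfl⟩⟩
    have hKpos : 0 < K := Nat.card_pos
    -- log of the counting identity
    have hmul := SB2.card_iso_mul N
    have hmulR : (K : ℝ) * ∏ π : Set τ, ((cnt π).factorial : ℝ) = (n.factorial : ℝ) := by
      exact_mod_cast congrArg (Nat.cast : ℕ → ℝ) hmul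
    have hK : Real.log K = Real.log (n.factorial) - ∑ π : Set τ, Real.log ((cnt π).factorial) := by
      have hlog := congrArg Real.log hmulR
      rw [Real.log_mul (by exact_mod_cast hKpos.ne') (by
          refine Finset.prod_ne_zero_iff.mpr fun π _ => ?_
          exact_mod_cast (Nat.factorial_pos (cnt π)).ne'),
        Real.log_prod (fun π _ => by exact_mod_cast (Nat.factorial_pos (cnt π)).ne')] at hlog
      linarith
    have hHB : HB N = Real.log K / l2 := by rw [HB, Real.logb, hKdef]
    -- HS rewritten
    have hterm : ∀ π : Set τ, -((cnt π : ℝ) / n) * Real.logb 2 ((cnt π : ℝ) / n)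
        = ((cnt π : ℝ) * Real.log n - (cnt π : ℝ) * Real.log (cnt π)) / (n * l2) := by
      intro π
      rcases Nat.eq_zero_or_pos (cnt π) with h | h
      · simp [h, Real.logb]
      · have hcpos : (0 : ℝ) < (cnt π : ℝ) := by exact_mod_cast h
        rw [Real.logb, Real.log_div hcpos.ne' hnpos.ne']
        field_simp
        ring
    have hHS : HS N = (∑ π : Set τ,
        ((cnt π : ℝ) * Real.log n - (cnt π : ℝ) * Real.log (cnt π))) / (n * l2) := by
      rw [HS]
      show ∑ π : Set τ, -((cnt π : ℝ) / n) * Real.logb 2 ((cnt π : ℝ) / n) = _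
      simp_rw [hterm]
      rw [← Finset.sum_div]
    have hdelta : HS N - (1 / n) * HB N = ((∑ π : Set τ,
        ((cnt π : ℝ) * Real.log n - (cnt π : ℝ) * Real.log (cnt π))) - Real.log K) / (n * l2) := by
      rw [hHS, hHB]
      field_simp
    -- numerator rewritten
    have hsumc : ∑ π : Set τ, (cnt π : ℝ) = n := by
      exact_mod_cast congrArg (Nat.cast : ℕ → ℝ) (SB2.sum_typeCount N)
    set X : ℝ := Real.log (n.factorial) - ((n : ℝ) * Real.log n - n) with hX
    set xf : Set τ → ℝ := fun π =>
      Real.log ((cnt π).factorial) - ((cnt π : ℝ) * Real.log (cnt π) - (cnt π : ℝ)) with hxf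
    have hnum : (∑ π : Set τ,
        ((cnt π : ℝ) * Real.log n - (cnt π : ℝ) * Real.log (cnt π))) - Real.log K
        = (∑ π : Set τ, xf π) - X := by
      rw [hK, hX]
      have e1 : ∑ π : Set τ, ((cnt π : ℝ) * Real.log n - (cnt π : ℝ) * Real.log (cnt π))
          = (∑ π : Set τ, (cnt π : ℝ)) * Real.log n
            - ∑ π : Set τ, (cnt π : ℝ) * Real.log (cnt π) := by
        rw [Finset.sum_sub_distrib, ← Finset.sum_mul]
      have e2 : ∑ π : Set τ, xf π = ∑ π : Set τ, Real.log ((cnt π).factorial)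
          - (∑ π : Set τ, (cnt π : ℝ) * Real.log (cnt π) - ∑ π : Set τ, (cnt π : ℝ)) := by
        simp only [hxf, Finset.sum_sub_distrib]
      rw [e1, e2, hsumc]
      ring
    -- bounds
    have hB0 : (0 : ℝ) ≤ Real.log ((n : ℝ) + 2) + 1 := by
      have : (0:ℝ) ≤ Real.log ((n:ℝ) + 2) := Real.log_nonneg (by linarith)
      linarith
    have hxb : ∀ π : Set τ, |xf π| ≤ c * (Real.log ((n : ℝ) + 2) + 1) := by
      intro π
      refine (hcb (cnt π)).trans ?_
      have hle : (cnt π : ℝ) ≤ n := by exact_mod_cast typeCount_le N π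
      have hlog := Real.log_le_log (by positivity : (0:ℝ) < (cnt π : ℝ) + 2)
        (show (cnt π : ℝ) + 2 ≤ (n : ℝ) + 2 by linarith)
      nlinarith
    have hXb : |X| ≤ c * (Real.log ((n : ℝ) + 2) + 1) := hcb n
    have hsum_abs : |∑ π : Set τ, xf π| ≤ (t : ℝ) * (c * (Real.log ((n : ℝ) + 2) + 1)) := by
      refine (Finset.abs_sum_le_sum_abs _ _).trans ?_
      have := Finset.sum_le_card_nsmul Finset.univ (fun π => |xf π|)
        (c * (Real.log ((n : ℝ) + 2) + 1)) (fun π _ => hxb π)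
      simpa [Finset.card_univ, nsmul_eq_mul, htdef] using this
    have habs : |(∑ π : Set τ, xf π) - X| ≤ ((t : ℝ) + 1) * (c * (Real.log ((n : ℝ) + 2) + 1)) := by
      calc |(∑ π : Set τ, xf π) - X| ≤ |∑ π : Set τ, xf π| + |X| := abs_sub _ _
        _ ≤ ((t : ℝ) + 1) * (c * (Real.log ((n : ℝ) + 2) + 1)) := by nlinarith
    -- conclude
    rw [hdelta, hnum, abs_div, abs_of_pos (by positivity : (0:ℝ) < (n : ℝ) * l2)]
    have hrw : g n = (((t : ℝ) + 1) * (c * (Real.log ((n : ℝ) + 2) + 1))) / ((n : ℝ) * l2) := by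
      rw [hgdef]
      field_simp
    rw [hrw]
    exact div_le_div_of_nonneg_right habs (by positivity) |>.trans_eq rfl
  -- the bound tends to 0
  have t1 : Filter.Tendsto (fun n : ℕ => Real.log ((n : ℝ) + 2) / (n : ℝ)) atTop (nhds 0) := by
    have h0 := Real.tendsto_pow_log_div_mul_add_atTop 1 (-2) 1 one_ne_zero
    have h2 : Filter.Tendsto (fun n : ℕ => (n : ℝ) + 2) atTop atTop :=
      Filter.tendsto_atTop_add_const_right _ 2 tendsto_natCast_atTop_atTop
    refine (h0.comp h2).congr fun n => ?_
    simp only [Function.comp_apply, pow_one]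
    congr 1
    ring
  have t2 : Filter.Tendsto (fun n : ℕ => 1 / (n : ℝ)) atTop (nhds 0) :=
    tendsto_one_div_atTop_nhds_zero_nat
  have t3 : Filter.Tendsto g atTop (nhds 0) := by
    have := (t1.add t2).const_mul (((t : ℝ) + 1) * c / l2)
    simpa [hgdef] using this
  refine squeeze_zero_norm' ?_ t3
  filter_upwards [Filter.eventually_ge_atTop 1] with n hn
  simpa [Real.norm_eq_abs] using main n hn

/-- For any sequence `(M_n)` where `M_n` is a `τ`-model of size `n`,
`H_S(M_n) − (1/n)·H_B(M_n) → 0` as `n → ∞`; in particular the Shannon entropy and the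
normalized Boltzmann entropy are asymptotically equivalent. -/
theorem shannon_boltzmann_asymptotic (τ : Type) [Fintype τ]
    (M : (n : ℕ) → UModel τ n) :
    Filter.Tendsto (fun n : ℕ => HS (M n) - (1 / n) * HB (M n))
      Filter.atTop (nhds 0) :=
  shannon_boltzmann_asymptotic' τ M
end

section
/- Let τ be a finite monadic vocabulary, let d be a positive integer, let M be a τ-model of size n, and let h ∈ {1,…,d−1}. If H_B^d(M) < log₂(binomial(n, h)), then C_d(M) < 6h + c_τ. -/
/-!
Common definitions: unary (monadic) first-order structures, FO[τ] formulas in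
negation normal form, formula size / quantifier rank / number of quantifiers,
semantics, description complexity, the equivalence `≡_d`, and the entropies.
-/

open Filter

section NumericLemmas

private lemma fact_pair_le_aux (n H s : ℕ) (h1 : H ≤ s) (h2 : 2*s ≤ n) :
    s.factorial * (n-s).factorial ≤ H.factorial * (n-H).factorial := by
  induction s, h1 using Nat.le_induction with
  | base => exact le_rfl
  | succ k hk ih =>
    have h2k : 2*k ≤ n := by omega
    refine le_trans ?_ (ih h2k)
    have e1 : n - k = (n - (k+1)) + 1 := by omega
    have hle : k+1 ≤ n - k := by omega
    calc (k+1).factorial * (n-(k+1)).factorial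
        = (k+1) * (k.factorial * (n-(k+1)).factorial) := by
          rw [Nat.factorial_succ]; ring
      _ ≤ (n-k) * (k.factorial * (n-(k+1)).factorial) := by
          exact Nat.mul_le_mul_right _ hle
      _ = k.factorial * (n-k).factorial := by rw [e1, Nat.factorial_succ]; ring

private lemma fact_pair_le (n H s : ℕ) (h1 : H ≤ s) (h2 : s + H ≤ n) :
    s.factorial * (n-s).factorial ≤ H.factorial * (n-H).factorial := by
  rcases le_or_gt (2*s) n with hc | hc
  · exact fact_pair_le_aux n H s h1 hc
  · have h1' : H ≤ n - s := by omega
    have h2' : 2*(n-s) ≤ n := by omega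
    have key := fact_pair_le_aux n H (n-s) h1' h2'
    have e : n - (n-s) = s := by omega
    rw [e] at key
    calc s.factorial * (n-s).factorial = (n-s).factorial * s.factorial := by ring
      _ ≤ H.factorial * (n-H).factorial := key

private lemma choose_le_choose_window {n H s : ℕ} (h1 : H ≤ s) (h2 : s + H ≤ n) :
    n.choose H ≤ n.choose s := by
  have hsn : s ≤ n := by omega
  have hHn : H ≤ n := by omega
  have key := fact_pair_le n H s h1 h2
  have e1 := Nat.choose_mul_factorial_mul_factorial hsn
  have e2 := Nat.choose_mul_factorial_mul_factorial hHn
  have hpos : 0 < s.factorial * (n-s).factorial :=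
    Nat.mul_pos (Nat.factorial_pos _) (Nat.factorial_pos _)
  have hcmp : n.choose H * (s.factorial * (n-s).factorial)
      ≤ n.choose s * (s.factorial * (n-s).factorial) := by
    calc n.choose H * (s.factorial * (n-s).factorial)
        ≤ n.choose H * (H.factorial * (n-H).factorial) := Nat.mul_le_mul_left _ key
      _ = n.choose H * H.factorial * (n-H).factorial := by ring
      _ = n.factorial := e2
      _ = n.choose s * s.factorial * (n-s).factorial := e1.symm
      _ = n.choose s * (s.factorial * (n-s).factorial) := by ring
  exact Nat.le_of_mul_le_mul_right hcmp hpos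

private lemma choose_prod_ge {n H a b : ℕ} (ha : a ≤ H) (hb : b ≤ H) (hab1 : H ≤ a + b)
    (hab2 : a + b ≤ n) (hwin : n < a + b + H) :
    n.choose H ≤ n.choose a * ((n-a).choose b) := by
  have hHn : H ≤ n := le_trans hab1 hab2
  -- step 1
  have s1 : a.factorial * b.factorial ≤ H.factorial * (a+b-H).factorial := by
    have key := fact_pair_le (a+b) (a+b-H) a (by omega) (by omega)
    have e1 : a + b - a = b := by omega
    have e2 : (a+b) - (a+b-H) = H := by omega
    rw [e1, e2] at key
    calc a.factorial * b.factorial ≤ (a+b-H).factorial * H.factorial := key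
      _ = H.factorial * (a+b-H).factorial := by ring
  -- step 2
  have s2 : (a+b-H).factorial * (n-a-b).factorial ≤ (n-H).factorial := by
    have hd := Nat.factorial_mul_factorial_dvd_factorial_add (a+b-H) (n-a-b)
    have e : (a+b-H) + (n-a-b) = n-H := by omega
    rw [e] at hd
    exact Nat.le_of_dvd (Nat.factorial_pos _) hd
  have key : a.factorial * (b.factorial * (n-a-b).factorial)
      ≤ H.factorial * (n-H).factorial := by
    calc a.factorial * (b.factorial * (n-a-b).factorial)
        = (a.factorial * b.factorial) * (n-a-b).factorial := by ring
      _ ≤ (H.factorial * (a+b-H).factorial) * (n-a-b).factorial :=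
          Nat.mul_le_mul_right _ s1
      _ = H.factorial * ((a+b-H).factorial * (n-a-b).factorial) := by ring
      _ ≤ H.factorial * (n-H).factorial := Nat.mul_le_mul_left _ s2
  have e1 := Nat.choose_mul_factorial_mul_factorial (show a ≤ n by omega)
  have e2 := Nat.choose_mul_factorial_mul_factorial (show b ≤ n - a by omega)
  have e3 := Nat.choose_mul_factorial_mul_factorial hHn
  have idn : (n.choose a * ((n-a).choose b)) * (a.factorial * (b.factorial * (n-a-b).factorial))
      = n.factorial := by
    have h4 : n - a - b = (n-a) - b := by omega
    calc (n.choose a * ((n-a).choose b)) * (a.factorial * (b.factorial * (n-a-b).factorial))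
        = (n.choose a * a.factorial) * ((n-a).choose b * b.factorial * (n-a-b).factorial) := by
          ring
      _ = (n.choose a * a.factorial) * ((n-a).choose b * b.factorial * ((n-a)-b).factorial) := by
          rw [h4]
      _ = (n.choose a * a.factorial) * (n-a).factorial := by rw [e2]
      _ = n.choose a * a.factorial * (n-a).factorial := by ring
      _ = n.factorial := e1
  have hpos : 0 < a.factorial * (b.factorial * (n-a-b).factorial) := by positivity
  have hcmp : n.choose H * (a.factorial * (b.factorial * (n-a-b).factorial))
      ≤ (n.choose a * ((n-a).choose b)) * (a.factorial * (b.factorial * (n-a-b).factorial)) := by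
    calc n.choose H * (a.factorial * (b.factorial * (n-a-b).factorial))
        ≤ n.choose H * (H.factorial * (n-H).factorial) := Nat.mul_le_mul_left _ key
      _ = n.choose H * H.factorial * (n-H).factorial := by ring
      _ = n.factorial := e3
      _ = (n.choose a * ((n-a).choose b)) * (a.factorial * (b.factorial * (n-a-b).factorial)) :=
          idn.symm
  exact Nat.le_of_mul_le_mul_right hcmp hpos

private lemma exists_mem_not_mem_finset {α : Type*} [DecidableEq α] {s t : Finset α}
    (h : s.card < t.card) : ∃ a ∈ t, a ∉ s := by
  by_contra hc
  push_neg at hc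
  have : t ⊆ s := fun a ha => hc a ha
  have := Finset.card_le_card this
  omega

end NumericLemmas
section FormulaGadgets

namespace FOG

variable {τ : Type} {n : ℕ}

open Classical in
noncomputable def typeAux (π : Set τ) (x : ℕ) : List τ → FO τ
  | [] => FO.eq x x
  | P :: l => FO.and (if P ∈ π then FO.pos P x else FO.npos P x) (typeAux π x l)

open Classical in
noncomputable def negTypeAux (π : Set τ) (x : ℕ) : List τ → FO τ
  | [] => FO.ne x x
  | P :: l => FO.or (if P ∈ π then FO.npos P x else FO.pos P x) (negTypeAux π x l)

lemma size_typeAux (π : Set τ) (x : ℕ) (l : List τ) :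
    (typeAux π x l).size = 2 * l.length + 1 := by
  induction l with
  | nil => rfl
  | cons P l ih =>
    simp only [typeAux, FO.size, ih, List.length_cons]
    split <;> simp [FO.size] <;> ring

lemma size_negTypeAux (π : Set τ) (x : ℕ) (l : List τ) :
    (negTypeAux π x l).size = 2 * l.length + 1 := by
  induction l with
  | nil => rfl
  | cons P l ih =>
    simp only [negTypeAux, FO.size, ih, List.length_cons]
    split <;> simp [FO.size] <;> ring

lemma qrank_typeAux (π : Set τ) (x : ℕ) (l : List τ) :
    (typeAux π x l).qrank = 0 := by
  induction l with
  | nil => rfl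
  | cons P l ih =>
    simp only [typeAux, FO.qrank, ih]
    split <;> simp [FO.qrank]

lemma qrank_negTypeAux (π : Set τ) (x : ℕ) (l : List τ) :
    (negTypeAux π x l).qrank = 0 := by
  induction l with
  | nil => rfl
  | cons P l ih =>
    simp only [negTypeAux, FO.qrank, ih]
    split <;> simp [FO.qrank]

lemma freeVars_typeAux (π : Set τ) (x : ℕ) (l : List τ) :
    (typeAux π x l).freeVars = {x} := by
  induction l with
  | nil => simp [typeAux, FO.freeVars]
  | cons P l ih =>
    simp only [typeAux, FO.freeVars, ih]
    split <;> simp [FO.freeVars]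

lemma freeVars_negTypeAux (π : Set τ) (x : ℕ) (l : List τ) :
    (negTypeAux π x l).freeVars = {x} := by
  induction l with
  | nil => simp [negTypeAux, FO.freeVars]
  | cons P l ih =>
    simp only [negTypeAux, FO.freeVars, ih]
    split <;> simp [FO.freeVars]

lemma sat_typeAux (M : UModel τ n) (s : ℕ → Fin n) (π : Set τ) (x : ℕ) (l : List τ) :
    FO.sat M s (typeAux π x l) ↔ ∀ P ∈ l, (P ∈ π ↔ P ∈ M (s x)) := by
  induction l with
  | nil => simp [typeAux, FO.sat]
  | cons P l ih =>
    simp only [typeAux, FO.sat, ih, List.mem_cons]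
    by_cases hP : P ∈ π
    · simp only [if_pos hP, FO.sat]
      constructor
      · rintro ⟨h1, h2⟩ Q hQ
        rcases hQ with rfl | hQ
        · exact ⟨fun _ => h1, fun _ => hP⟩
        · exact h2 Q hQ
      · intro h
        exact ⟨(h P (Or.inl rfl)).mp hP, fun Q hQ => h Q (Or.inr hQ)⟩
    · simp only [if_neg hP, FO.sat]
      constructor
      · rintro ⟨h1, h2⟩ Q hQ
        rcases hQ with rfl | hQ
        · exact ⟨fun h => absurd h hP, fun h => absurd h h1⟩
        · exact h2 Q hQ
      · intro h
        exact ⟨fun hm => hP ((h P (Or.inl rfl)).mpr hm), fun Q hQ => h Q (Or.inr hQ)⟩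

lemma sat_negTypeAux (M : UModel τ n) (s : ℕ → Fin n) (π : Set τ) (x : ℕ) (l : List τ) :
    FO.sat M s (negTypeAux π x l) ↔ ∃ P ∈ l, ¬(P ∈ π ↔ P ∈ M (s x)) := by
  induction l with
  | nil => simp [negTypeAux, FO.sat]
  | cons P l ih =>
    simp only [negTypeAux, FO.sat, ih, List.mem_cons]
    by_cases hP : P ∈ π
    · simp only [if_pos hP, FO.sat]
      constructor
      · rintro (h1 | ⟨Q, hQ, h2⟩)
        · exact ⟨P, Or.inl rfl, fun h => h1 (h.mp hP)⟩
        · exact ⟨Q, Or.inr hQ, h2⟩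
      · rintro ⟨Q, hQ | hQ, h2⟩
        · subst hQ
          exact Or.inl (fun hm => h2 ⟨fun _ => hm, fun _ => hP⟩)
        · exact Or.inr ⟨Q, hQ, h2⟩
    · simp only [if_neg hP, FO.sat]
      constructor
      · rintro (h1 | ⟨Q, hQ, h2⟩)
        · exact ⟨P, Or.inl rfl, fun h => hP (h.mpr h1)⟩
        · exact ⟨Q, Or.inr hQ, h2⟩
      · rintro ⟨Q, hQ | hQ, h2⟩
        · subst hQ
          refine Or.inl ?_
          by_contra hmem
          exact h2 ⟨fun h => absurd h hP, fun h => absurd h hmem⟩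
        · exact Or.inr ⟨Q, hQ, h2⟩

/-- full type formula -/
noncomputable def typeFml [Fintype τ] (π : Set τ) (x : ℕ) : FO τ :=
  typeAux π x (Finset.univ : Finset τ).toList

noncomputable def negTypeFml [Fintype τ] (π : Set τ) (x : ℕ) : FO τ :=
  negTypeAux π x (Finset.univ : Finset τ).toList

lemma sat_typeFml [Fintype τ] (M : UModel τ n) (s : ℕ → Fin n) (π : Set τ) (x : ℕ) :
    FO.sat M s (typeFml π x) ↔ M (s x) = π := by
  rw [typeFml, sat_typeAux]
  constructor
  · intro h
    ext P
    exact (h P (by simp [Finset.mem_toList])).symm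
  · intro h P _
    rw [h]

lemma sat_negTypeFml [Fintype τ] (M : UModel τ n) (s : ℕ → Fin n) (π : Set τ) (x : ℕ) :
    FO.sat M s (negTypeFml π x) ↔ M (s x) ≠ π := by
  rw [negTypeFml, sat_negTypeAux]
  constructor
  · rintro ⟨P, _, hP⟩ rfl
    exact hP Iff.rfl
  · intro h
    rcases Classical.em (∃ P, ¬(P ∈ π ↔ P ∈ M (s x))) with he | he
    · obtain ⟨P, hP⟩ := he
      exact ⟨P, by simp [Finset.mem_toList], hP⟩
    · exact absurd (Set.ext fun P => (of_not_not fun hnc => he ⟨P, hnc⟩).symm) (fun e => h e)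

lemma size_typeFml [Fintype τ] (π : Set τ) (x : ℕ) :
    (typeFml π x).size = 2 * Fintype.card τ + 1 := by
  rw [typeFml, size_typeAux, Finset.length_toList, Finset.card_univ]

lemma size_negTypeFml [Fintype τ] (π : Set τ) (x : ℕ) :
    (negTypeFml π x).size = 2 * Fintype.card τ + 1 := by
  rw [negTypeFml, size_negTypeAux, Finset.length_toList, Finset.card_univ]

lemma qrank_typeFml [Fintype τ] (π : Set τ) (x : ℕ) : (typeFml π x).qrank = 0 :=
  qrank_typeAux _ _ _

lemma qrank_negTypeFml [Fintype τ] (π : Set τ) (x : ℕ) : (negTypeFml π x).qrank = 0 :=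
  qrank_negTypeAux _ _ _

lemma freeVars_typeFml [Fintype τ] (π : Set τ) (x : ℕ) : (typeFml π x).freeVars = {x} :=
  freeVars_typeAux _ _ _

lemma freeVars_negTypeFml [Fintype τ] (π : Set τ) (x : ℕ) : (negTypeFml π x).freeVars = {x} :=
  freeVars_negTypeAux _ _ _

/-- blocks of quantifiers on variables 1..k -/
def alls : ℕ → FO τ → FO τ
  | 0, φ => φ
  | k+1, φ => FO.all (k+1) (alls k φ)

def exs : ℕ → FO τ → FO τ
  | 0, φ => φ
  | k+1, φ => FO.ex (k+1) (exs k φ)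

lemma size_alls (k : ℕ) (φ : FO τ) : (alls k φ).size = φ.size + k := by
  induction k with
  | zero => rfl
  | succ k ih => simp [alls, FO.size, ih]; ring

lemma size_exs (k : ℕ) (φ : FO τ) : (exs k φ).size = φ.size + k := by
  induction k with
  | zero => rfl
  | succ k ih => simp [exs, FO.size, ih]; ring

lemma qrank_alls (k : ℕ) (φ : FO τ) : (alls k φ).qrank = φ.qrank + k := by
  induction k with
  | zero => rfl
  | succ k ih => simp [alls, FO.qrank, ih]; ring

lemma qrank_exs (k : ℕ) (φ : FO τ) : (exs k φ).qrank = φ.qrank + k := by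
  induction k with
  | zero => rfl
  | succ k ih => simp [exs, FO.qrank, ih]; ring

lemma freeVars_alls (k : ℕ) (φ : FO τ) :
    (alls k φ).freeVars = φ.freeVars \ Finset.Icc 1 k := by
  induction k with
  | zero => simp [alls]
  | succ k ih =>
    simp only [alls, FO.freeVars, ih]
    ext i
    simp only [Finset.mem_sdiff, Finset.mem_Icc, Finset.mem_singleton]
    constructor
    · rintro ⟨⟨h1, h2⟩, h3⟩
      refine ⟨h1, ?_⟩
      omega
    · rintro ⟨h1, h2⟩
      refine ⟨⟨h1, ?_⟩, ?_⟩ <;> omega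

lemma freeVars_exs (k : ℕ) (φ : FO τ) :
    (exs k φ).freeVars = φ.freeVars \ Finset.Icc 1 k := by
  induction k with
  | zero => simp [exs]
  | succ k ih =>
    simp only [exs, FO.freeVars, ih]
    ext i
    simp only [Finset.mem_sdiff, Finset.mem_Icc, Finset.mem_singleton]
    constructor
    · rintro ⟨⟨h1, h2⟩, h3⟩
      refine ⟨h1, ?_⟩
      omega
    · rintro ⟨h1, h2⟩
      refine ⟨⟨h1, ?_⟩, ?_⟩ <;> omega

lemma sat_alls (M : UModel τ n) (k : ℕ) (φ : FO τ) (s : ℕ → Fin n) :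
    FO.sat M s (alls k φ) ↔
      ∀ s' : ℕ → Fin n, (∀ i, i ∉ Finset.Icc 1 k → s' i = s i) → FO.sat M s' φ := by
  induction k generalizing s with
  | zero =>
    simp only [alls]
    constructor
    · intro h s' hs'
      have : s' = s := funext fun i => hs' i (by simp)
      rwa [this]
    · intro h
      exact h s (fun _ _ => rfl)
  | succ k ih =>
    show (∀ a : Fin n, FO.sat M (Function.update s (k+1) a) (alls k φ)) ↔ _
    constructor
    · intro h s'' hs''
      have h1 := (ih (Function.update s (k+1) (s'' (k+1)))).mp (h (s'' (k+1)))
      refine h1 s'' ?_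
      intro i hi
      by_cases hik : i = k+1
      · subst hik
        rw [Function.update_self]
      · rw [Function.update_of_ne hik]
        refine hs'' i ?_
        simp only [Finset.mem_Icc] at hi ⊢
        omega
    · intro h a
      refine (ih (Function.update s (k+1) a)).mpr ?_
      intro s' hs'
      refine h s' ?_
      intro i hi
      simp only [Finset.mem_Icc] at hi
      have hik : i ≠ k+1 := by omega
      rw [hs' i (by simp only [Finset.mem_Icc]; omega), Function.update_of_ne hik]

lemma sat_exs (M : UModel τ n) (k : ℕ) (φ : FO τ) (s : ℕ → Fin n) :
    FO.sat M s (exs k φ) ↔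
      ∃ s' : ℕ → Fin n, (∀ i, i ∉ Finset.Icc 1 k → s' i = s i) ∧ FO.sat M s' φ := by
  induction k generalizing s with
  | zero =>
    simp only [exs]
    constructor
    · intro h
      exact ⟨s, fun _ _ => rfl, h⟩
    · rintro ⟨s', hs', h⟩
      have : s' = s := funext fun i => hs' i (by simp)
      rwa [this] at h
  | succ k ih =>
    show (∃ a : Fin n, FO.sat M (Function.update s (k+1) a) (exs k φ)) ↔ _
    constructor
    · rintro ⟨a, ha⟩
      obtain ⟨s', hs', hsat⟩ := (ih (Function.update s (k+1) a)).mp ha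
      refine ⟨s', ?_, hsat⟩
      intro i hi
      simp only [Finset.mem_Icc] at hi
      by_cases hik : i = k+1
      · exact absurd (show 1 ≤ i ∧ i ≤ k + 1 by omega) hi
      · rw [hs' i (by simp only [Finset.mem_Icc]; omega), Function.update_of_ne hik]
    · rintro ⟨s', hs', hsat⟩
      refine ⟨s' (k+1), ?_⟩
      refine (ih (Function.update s (k+1) (s' (k+1)))).mpr ⟨s', ?_, hsat⟩
      intro i hi
      by_cases hik : i = k+1
      · subst hik
        rw [Function.update_self]
      · rw [Function.update_of_ne hik]
        refine hs' i ?_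
        simp only [Finset.mem_Icc] at hi ⊢
        omega

end FOG

end FormulaGadgets
section CountingFormulas

namespace FOG

variable {τ : Type} {n : ℕ}

noncomputable def exBody [Fintype τ] (π : Set τ) : ℕ → FO τ
  | 0 => typeFml π 0
  | k+1 => FO.and (exBody π k) (FO.ne 0 (k+1))

noncomputable def orBody [Fintype τ] (π : Set τ) : ℕ → FO τ
  | 0 => negTypeFml π 0
  | k+1 => FO.or (orBody π k) (FO.eq 0 (k+1))

noncomputable def atLeast [Fintype τ] (π : Set τ) (m : ℕ) : FO τ :=
  alls (m-1) (FO.ex 0 (exBody π (m-1)))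

noncomputable def atMost [Fintype τ] (π : Set τ) (m : ℕ) : FO τ :=
  exs m (FO.all 0 (orBody π m))

noncomputable def exactly [Fintype τ] (π : Set τ) (m : ℕ) : FO τ :=
  FO.and (atLeast π m) (atMost π m)

variable [Fintype τ]

lemma size_exBody (π : Set τ) (k : ℕ) :
    (exBody π k).size = 2 * Fintype.card τ + 1 + 2 * k := by
  induction k with
  | zero => simp [exBody, size_typeFml]
  | succ k ih => simp [exBody, FO.size, ih]; ring

lemma size_orBody (π : Set τ) (k : ℕ) :
    (orBody π k).size = 2 * Fintype.card τ + 1 + 2 * k := by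
  induction k with
  | zero => simp [orBody, size_negTypeFml]
  | succ k ih => simp [orBody, FO.size, ih]; ring

lemma size_atLeast (π : Set τ) (m : ℕ) :
    (atLeast π m).size = 2 * Fintype.card τ + 2 + 3 * (m-1) := by
  rw [atLeast, size_alls]
  show (exBody π (m-1)).size + 1 + (m-1) = _
  rw [size_exBody]
  ring

lemma size_atMost (π : Set τ) (m : ℕ) :
    (atMost π m).size = 2 * Fintype.card τ + 2 + 3 * m := by
  rw [atMost, size_exs]
  show (orBody π m).size + 1 + m = _
  rw [size_orBody]
  ring

lemma size_exactly (π : Set τ) (m : ℕ) :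
    (exactly π m).size = 4 * Fintype.card τ + 5 + 3 * (m-1) + 3 * m := by
  show (atLeast π m).size + (atMost π m).size + 1 = _
  rw [size_atLeast, size_atMost]
  ring

lemma qrank_exBody (π : Set τ) (k : ℕ) : (exBody π k).qrank = 0 := by
  induction k with
  | zero => simp [exBody, qrank_typeFml]
  | succ k ih => simp [exBody, FO.qrank, ih]

lemma qrank_orBody (π : Set τ) (k : ℕ) : (orBody π k).qrank = 0 := by
  induction k with
  | zero => simp [orBody, qrank_negTypeFml]
  | succ k ih => simp [orBody, FO.qrank, ih]

lemma qrank_atLeast (π : Set τ) (m : ℕ) : (atLeast π m).qrank = m - 1 + 1 := by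
  rw [atLeast, qrank_alls]
  show (exBody π (m-1)).qrank + 1 + (m-1) = _
  rw [qrank_exBody]
  omega

lemma qrank_atMost (π : Set τ) (m : ℕ) : (atMost π m).qrank = m + 1 := by
  rw [atMost, qrank_exs]
  show (orBody π m).qrank + 1 + m = _
  rw [qrank_orBody]
  omega

lemma qrank_exactly (π : Set τ) (m : ℕ) : (exactly π m).qrank = m + 1 := by
  show max (atLeast π m).qrank (atMost π m).qrank = _
  rw [qrank_atLeast, qrank_atMost]
  omega

lemma freeVars_exBody (π : Set τ) (k : ℕ) :
    (exBody π k).freeVars = Finset.range (k+1) := by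
  induction k with
  | zero =>
    rw [exBody, freeVars_typeFml]
    ext i; simp
  | succ k ih =>
    show (exBody π k).freeVars ∪ ({0, k+1} : Finset ℕ) = _
    rw [ih]
    ext i
    simp only [Finset.mem_union, Finset.mem_range, Finset.mem_insert, Finset.mem_singleton]
    omega

lemma freeVars_orBody (π : Set τ) (k : ℕ) :
    (orBody π k).freeVars = Finset.range (k+1) := by
  induction k with
  | zero =>
    rw [orBody, freeVars_negTypeFml]
    ext i; simp
  | succ k ih =>
    show (orBody π k).freeVars ∪ ({0, k+1} : Finset ℕ) = _
    rw [ih]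
    ext i
    simp only [Finset.mem_union, Finset.mem_range, Finset.mem_insert, Finset.mem_singleton]
    omega

lemma freeVars_atLeast (π : Set τ) (m : ℕ) : (atLeast π m).freeVars = ∅ := by
  rw [atLeast, freeVars_alls]
  show ((exBody π (m-1)).freeVars \ {0}) \ _ = _
  rw [freeVars_exBody]
  ext i
  simp only [Finset.mem_sdiff, Finset.mem_range, Finset.mem_singleton, Finset.mem_Icc,
    Finset.notMem_empty, iff_false]
  omega

lemma freeVars_atMost (π : Set τ) (m : ℕ) : (atMost π m).freeVars = ∅ := by
  rw [atMost, freeVars_exs]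
  show ((orBody π m).freeVars \ {0}) \ _ = _
  rw [freeVars_orBody]
  ext i
  simp only [Finset.mem_sdiff, Finset.mem_range, Finset.mem_singleton, Finset.mem_Icc,
    Finset.notMem_empty, iff_false]
  omega

lemma freeVars_exactly (π : Set τ) (m : ℕ) : (exactly π m).freeVars = ∅ := by
  show (atLeast π m).freeVars ∪ (atMost π m).freeVars = ∅
  rw [freeVars_atLeast, freeVars_atMost]
  simp

lemma sat_exBody (M : UModel τ n) (s : ℕ → Fin n) (π : Set τ) (k : ℕ) :
    FO.sat M s (exBody π k) ↔ (M (s 0) = π ∧ ∀ i ∈ Finset.Icc 1 k, s 0 ≠ s i) := by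
  induction k with
  | zero => simp [exBody, sat_typeFml]
  | succ k ih =>
    show (FO.sat M s (exBody π k) ∧ s 0 ≠ s (k+1)) ↔ _
    rw [ih]
    constructor
    · rintro ⟨⟨h1, h2⟩, h3⟩
      refine ⟨h1, ?_⟩
      intro i hi
      simp only [Finset.mem_Icc] at hi
      by_cases hik : i = k+1
      · subst hik; exact h3
      · exact h2 i (by simp only [Finset.mem_Icc]; omega)
    · rintro ⟨h1, h2⟩
      exact ⟨⟨h1, fun i hi => h2 i (by simp only [Finset.mem_Icc] at hi ⊢; omega)⟩,
        h2 (k+1) (by simp only [Finset.mem_Icc]; omega)⟩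

lemma sat_orBody (M : UModel τ n) (s : ℕ → Fin n) (π : Set τ) (k : ℕ) :
    FO.sat M s (orBody π k) ↔ (M (s 0) ≠ π ∨ ∃ i ∈ Finset.Icc 1 k, s 0 = s i) := by
  induction k with
  | zero => simp [orBody, sat_negTypeFml]
  | succ k ih =>
    show (FO.sat M s (orBody π k) ∨ s 0 = s (k+1)) ↔ _
    rw [ih]
    constructor
    · rintro ((h1 | ⟨i, hi, h2⟩) | h3)
      · exact Or.inl h1
      · exact Or.inr ⟨i, by simp only [Finset.mem_Icc] at hi ⊢; omega, h2⟩
      · exact Or.inr ⟨k+1, by simp only [Finset.mem_Icc]; omega, h3⟩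
    · rintro (h1 | ⟨i, hi, h2⟩)
      · exact Or.inl (Or.inl h1)
      · simp only [Finset.mem_Icc] at hi
        by_cases hik : i = k+1
        · subst hik; exact Or.inr h2
        · exact Or.inl (Or.inr ⟨i, by simp only [Finset.mem_Icc]; omega, h2⟩)

lemma sat_ex_exBody (M : UModel τ n) (s' : ℕ → Fin n) (π : Set τ) (k : ℕ) :
    FO.sat M s' (FO.ex 0 (exBody π k)) ↔
      ∃ a : Fin n, M a = π ∧ ∀ i ∈ Finset.Icc 1 k, a ≠ s' i := by
  show (∃ a : Fin n, FO.sat M (Function.update s' 0 a) (exBody π k)) ↔ _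
  apply exists_congr
  intro a
  rw [sat_exBody]
  have h0 : Function.update s' 0 a 0 = a := Function.update_self _ _ _
  rw [h0]
  apply and_congr Iff.rfl
  apply forall₂_congr
  intro i hi
  simp only [Finset.mem_Icc] at hi
  rw [Function.update_of_ne (by omega : i ≠ 0)]

lemma sat_all_orBody (M : UModel τ n) (s' : ℕ → Fin n) (π : Set τ) (k : ℕ) :
    FO.sat M s' (FO.all 0 (orBody π k)) ↔
      ∀ a : Fin n, M a ≠ π ∨ ∃ i ∈ Finset.Icc 1 k, a = s' i := by
  show (∀ a : Fin n, FO.sat M (Function.update s' 0 a) (orBody π k)) ↔ _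
  apply forall_congr'
  intro a
  rw [sat_orBody]
  have h0 : Function.update s' 0 a 0 = a := Function.update_self _ _ _
  rw [h0]
  apply or_congr Iff.rfl
  apply exists_congr
  intro i
  constructor
  · rintro ⟨hi, he⟩
    refine ⟨hi, ?_⟩
    simp only [Finset.mem_Icc] at hi
    rwa [Function.update_of_ne (by omega : i ≠ 0)] at he
  · rintro ⟨hi, he⟩
    refine ⟨hi, ?_⟩
    simp only [Finset.mem_Icc] at hi
    rwa [Function.update_of_ne (by omega : i ≠ 0)]

open Classical in
lemma sat_atLeast (M : UModel τ n) (s : ℕ → Fin n) (π : Set τ) (m : ℕ) (hm : 1 ≤ m) :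
    FO.sat M s (atLeast π m) ↔
      m ≤ (Finset.univ.filter (fun a : Fin n => M a = π)).card := by
  rw [atLeast, sat_alls]
  constructor
  · intro H2
    by_contra hcon
    push_neg at hcon
    set l := (Finset.univ.filter (fun a : Fin n => M a = π)).toList with hl
    have hlen : l.length ≤ m - 1 := by
      rw [hl, Finset.length_toList]; omega
    classical
    set s' : ℕ → Fin n := fun i =>
      if hi : 1 ≤ i ∧ i - 1 < l.length then l[i-1]'hi.2 else s i with hs'
    have hag : ∀ i, i ∉ Finset.Icc 1 (m-1) → s' i = s i := by
      intro i hi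
      simp only [Finset.mem_Icc] at hi
      have hni : ¬(1 ≤ i ∧ i - 1 < l.length) := by omega
      simp only [hs', dif_neg hni]
    obtain ⟨a, ha1, ha2⟩ := (sat_ex_exBody M s' π (m-1)).mp (H2 s' hag)
    have hal : a ∈ l := by
      rw [hl, Finset.mem_toList, Finset.mem_filter]
      exact ⟨Finset.mem_univ a, ha1⟩
    obtain ⟨j, hj, hja⟩ := List.mem_iff_getElem.mp hal
    have hji : j + 1 ∈ Finset.Icc 1 (m-1) := by
      simp only [Finset.mem_Icc]; omega
    refine ha2 (j+1) hji ?_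
    have hcond : 1 ≤ j+1 ∧ (j+1) - 1 < l.length := by omega
    simp only [hs', dif_pos hcond]
    exact hja.symm
  · intro hcard s' hag
    rw [sat_ex_exBody]
    set F := (Finset.Icc 1 (m-1)).image s' with hF
    have hFcard : F.card < (Finset.univ.filter (fun a : Fin n => M a = π)).card := by
      calc F.card ≤ (Finset.Icc 1 (m-1)).card := Finset.card_image_le
        _ = m - 1 := by rw [Nat.card_Icc]; omega
        _ < m := by omega
        _ ≤ _ := hcard
    obtain ⟨a, haA, haF⟩ := exists_mem_not_mem_finset hFcard
    rw [Finset.mem_filter] at haA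
    refine ⟨a, haA.2, ?_⟩
    intro i hi hai
    exact haF (Finset.mem_image.mpr ⟨i, hi, hai.symm⟩)

open Classical in
lemma sat_atMost (M : UModel τ n) (s : ℕ → Fin n) (π : Set τ) (m : ℕ) :
    FO.sat M s (atMost π m) ↔
      (Finset.univ.filter (fun a : Fin n => M a = π)).card ≤ m := by
  rw [atMost, sat_exs]
  constructor
  · rintro ⟨s', _, hsat⟩
    rw [sat_all_orBody] at hsat
    have hsub : (Finset.univ.filter (fun a : Fin n => M a = π)) ⊆
        (Finset.Icc 1 m).image s' := by
      intro a ha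
      rw [Finset.mem_filter] at ha
      rcases hsat a with h1 | ⟨i, hi, h2⟩
      · exact absurd ha.2 h1
      · exact Finset.mem_image.mpr ⟨i, hi, h2.symm⟩
    calc (Finset.univ.filter (fun a : Fin n => M a = π)).card
        ≤ ((Finset.Icc 1 m).image s').card := Finset.card_le_card hsub
      _ ≤ (Finset.Icc 1 m).card := Finset.card_image_le
      _ = m := by rw [Nat.card_Icc]; omega
  · intro hcard
    classical
    set l := (Finset.univ.filter (fun a : Fin n => M a = π)).toList with hl
    have hlen : l.length ≤ m := by
      rw [hl, Finset.length_toList]; omega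
    set s' : ℕ → Fin n := fun i =>
      if hi : 1 ≤ i ∧ i - 1 < l.length then l[i-1]'hi.2 else s i with hs'
    refine ⟨s', ?_, ?_⟩
    · intro i hi
      simp only [Finset.mem_Icc] at hi
      have hni : ¬(1 ≤ i ∧ i - 1 < l.length) := by omega
      simp only [hs', dif_neg hni]
    · rw [sat_all_orBody]
      intro a
      by_cases ha : M a = π
      · refine Or.inr ?_
        have hal : a ∈ l := by
          rw [hl, Finset.mem_toList, Finset.mem_filter]
          exact ⟨Finset.mem_univ a, ha⟩
        obtain ⟨j, hj, hja⟩ := List.mem_iff_getElem.mp hal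
        refine ⟨j+1, by simp only [Finset.mem_Icc]; omega, ?_⟩
        have hcond : 1 ≤ j+1 ∧ (j+1) - 1 < l.length := by omega
        simp only [hs', dif_pos hcond]
        exact hja.symm
      · exact Or.inl ha

open Classical in
lemma sat_exactly (M : UModel τ n) (s : ℕ → Fin n) (π : Set τ) (m : ℕ) (hm : 1 ≤ m) :
    FO.sat M s (exactly π m) ↔
      (Finset.univ.filter (fun a : Fin n => M a = π)).card = m := by
  show (FO.sat M s (atLeast π m) ∧ FO.sat M s (atMost π m)) ↔ _
  rw [sat_atLeast M s π m hm, sat_atMost]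
  omega

/-- disjunction of type formulas over a list of types -/
noncomputable def orTypes (x : ℕ) : List (Set τ) → FO τ
  | [] => FO.ne x x
  | π :: l => FO.or (typeFml π x) (orTypes x l)

lemma sat_orTypes (M : UModel τ n) (s : ℕ → Fin n) (x : ℕ) (L : List (Set τ)) :
    FO.sat M s (orTypes x L) ↔ ∃ π ∈ L, M (s x) = π := by
  induction L with
  | nil => simp [orTypes, FO.sat]
  | cons π l ih =>
    show (FO.sat M s (typeFml π x) ∨ FO.sat M s (orTypes x l)) ↔ _
    rw [ih, sat_typeFml]
    simp

lemma size_orTypes (x : ℕ) (L : List (Set τ)) :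
    (orTypes x L).size = 1 + L.length * (2 * Fintype.card τ + 2) := by
  induction L with
  | nil => simp [orTypes, FO.size]
  | cons π l ih =>
    show (typeFml π x).size + (orTypes x l).size + 1 = _
    rw [ih, size_typeFml]
    simp [List.length_cons]
    ring

lemma qrank_orTypes (x : ℕ) (L : List (Set τ)) : (orTypes x L).qrank = 0 := by
  induction L with
  | nil => rfl
  | cons π l ih =>
    show max (typeFml π x).qrank (orTypes x l).qrank = 0
    rw [ih, qrank_typeFml]
    simp

lemma freeVars_orTypes (x : ℕ) (L : List (Set τ)) : (orTypes x L).freeVars = {x} := by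
  induction L with
  | nil => show ({x, x} : Finset ℕ) = {x}; simp
  | cons π l ih =>
    show (typeFml π x).freeVars ∪ (orTypes x l).freeVars = {x}
    rw [ih, freeVars_typeFml]
    simp

lemma sat_foldr_and (M : UModel τ n) (s : ℕ → Fin n) (c : FO τ) (l : List (FO τ)) :
    FO.sat M s (l.foldr FO.and c) ↔ (∀ ψ ∈ l, FO.sat M s ψ) ∧ FO.sat M s c := by
  induction l with
  | nil => simp
  | cons ψ l ih =>
    show (FO.sat M s ψ ∧ FO.sat M s (l.foldr FO.and c)) ↔ _
    rw [ih]
    constructor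
    · rintro ⟨h1, h2, h3⟩
      refine ⟨fun χ hχ => ?_, h3⟩
      rcases List.mem_cons.mp hχ with rfl | hχ
      · exact h1
      · exact h2 χ hχ
    · rintro ⟨h1, h2⟩
      exact ⟨h1 ψ (List.mem_cons_self), fun χ hχ => h1 χ (List.mem_cons_of_mem _ hχ), h2⟩

lemma size_foldr_and (c : FO τ) (l : List (FO τ)) :
    (l.foldr FO.and c).size = (l.map (fun ψ => ψ.size + 1)).sum + c.size := by
  induction l with
  | nil => simp
  | cons ψ l ih =>
    show ψ.size + (l.foldr FO.and c).size + 1 = _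
    rw [ih]
    simp
    ring

lemma qrank_foldr_and (c : FO τ) (l : List (FO τ)) (d : ℕ) (hc : c.qrank ≤ d)
    (hl : ∀ ψ ∈ l, ψ.qrank ≤ d) : (l.foldr FO.and c).qrank ≤ d := by
  induction l with
  | nil => exact hc
  | cons ψ l ih =>
    show max ψ.qrank (l.foldr FO.and c).qrank ≤ d
    exact max_le (hl ψ (List.mem_cons_self))
      (ih fun χ hχ => hl χ (List.mem_cons_of_mem _ hχ))

lemma freeVars_foldr_and (c : FO τ) (l : List (FO τ)) (hc : c.freeVars = ∅)
    (hl : ∀ ψ ∈ l, ψ.freeVars = ∅) : (l.foldr FO.and c).freeVars = ∅ := by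
  induction l with
  | nil => exact hc
  | cons ψ l ih =>
    show ψ.freeVars ∪ (l.foldr FO.and c).freeVars = ∅
    rw [hl ψ (List.mem_cons_self), ih fun χ hχ => hl χ (List.mem_cons_of_mem _ hχ)]
    simp

end FOG

end CountingFormulas
section CountingModels

open Finset

variable {τ : Type} [Fintype τ] {n : ℕ}

open Classical in
lemma typeCount_eq_card (M : UModel τ n) (π : Set τ) :
    typeCount M π = (Finset.univ.filter (fun x : Fin n => M x = π)).card := by
  rw [typeCount, ← Set.ncard_coe_finset]
  congr 1
  ext x
  simp

open Classical in
lemma card_filter_mem_sum (M : UModel τ n) (𝒜 : Finset (Set τ)) :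
    (Finset.univ.filter (fun x : Fin n => M x ∈ 𝒜)).card
      = ∑ π ∈ 𝒜, (Finset.univ.filter (fun x : Fin n => M x = π)).card := by
  rw [Finset.card_eq_sum_card_fiberwise (f := M) (t := 𝒜) (s := Finset.univ.filter (fun x : Fin n => M x ∈ 𝒜))
    (fun x hx => (Finset.mem_filter.mp hx).2)]
  apply Finset.sum_congr rfl
  intro π hπ
  congr 1
  ext x
  simp only [Finset.mem_filter, Finset.mem_univ, true_and]
  constructor
  · rintro ⟨_, h⟩; exact h
  · intro h; exact ⟨h ▸ hπ, h⟩

open Classical in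
lemma sum_card_fibers (M : UModel τ n) :
    ∑ π : Set τ, (Finset.univ.filter (fun x : Fin n => M x = π)).card = n := by
  have := card_filter_mem_sum M Finset.univ
  simp only [Finset.mem_univ, Finset.filter_true] at this
  rw [← this]
  simp

open Classical in
private lemma card_equivD_ge_aux (M : UModel τ n) (d : ℕ) (U V : Set (Set τ)) (hUV : Disjoint U V) :
    n.choose ((Finset.univ.filter (fun x : Fin n => M x ∈ U)).card) *
      ((n - (Finset.univ.filter (fun x : Fin n => M x ∈ U)).card).choose
        ((Finset.univ.filter (fun x : Fin n => M x ∈ V)).card))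
      ≤ Nat.card {M' : UModel τ n // EquivD d M' M} := by
  classical
  set SU := Finset.univ.filter (fun x : Fin n => M x ∈ U) with hSU
  set SV := Finset.univ.filter (fun x : Fin n => M x ∈ V) with hSV
  set a := SU.card with ha
  set b := SV.card with hb
  have hdisjS : Disjoint SU SV := by
    rw [Finset.disjoint_left]
    intro x hx hx'
    rw [hSU, Finset.mem_filter] at hx
    rw [hSV, Finset.mem_filter] at hx'
    exact Set.disjoint_left.mp hUV hx.2 hx'.2
  -- the indexing finset
  set F := (Finset.univ.powersetCard a (α := Fin n)).sigma
      (fun A => (Finset.univ \ A).powersetCard b) with hF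
  have hcardF : F.card = n.choose a * (n - a).choose b := by
    rw [hF, Finset.card_sigma]
    have hly : ∀ A ∈ Finset.univ.powersetCard a (α := Fin n),
        ((Finset.univ \ A).powersetCard b).card = (n-a).choose b := by
      intro A hA
      rw [Finset.card_powersetCard, Finset.card_sdiff_of_subset (Finset.subset_univ A),
        Finset.card_univ, Fintype.card_fin, (Finset.mem_powersetCard.mp hA).2]
    rw [Finset.sum_congr rfl hly, Finset.sum_const, Finset.card_powersetCard,
      Finset.card_univ, Fintype.card_fin, smul_eq_mul]
  -- sizes of the reference pieces
  have hSUcard : SU.card = a := rfl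
  have hSVcard : SV.card = b := rfl
  have habn : a + b ≤ n := by
    have := Finset.card_union_of_disjoint hdisjS
    have hle := Finset.card_le_card (Finset.subset_univ (SU ∪ SV))
    rw [this] at hle
    simpa using hle
  -- construct, for each pair (A, B), a model
  have hconstr : ∀ A B : Finset (Fin n), A.card = a → B.card = b → Disjoint A B →
      ∃ M' : UModel τ n, EquivD d M' M ∧
        (∀ x, M' x ∈ U ↔ x ∈ A) ∧ (∀ x, M' x ∈ V ↔ x ∈ B) := by
    intro A B hA hB hAB
    set C := (Finset.univ \ A) \ B with hC
    set SC := (Finset.univ \ SU) \ SV with hSC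
    have hCcard : C.card = n - a - b := by
      rw [hC, Finset.card_sdiff_of_subset, Finset.card_sdiff_of_subset (Finset.subset_univ A),
        Finset.card_univ, Fintype.card_fin, hA, hB]
      rw [Finset.subset_sdiff]
      exact ⟨Finset.subset_univ B, hAB.symm⟩
    have hSCcard : SC.card = n - a - b := by
      rw [hSC, Finset.card_sdiff_of_subset, Finset.card_sdiff_of_subset (Finset.subset_univ SU),
        Finset.card_univ, Fintype.card_fin, hSUcard, hSVcard]
      rw [Finset.subset_sdiff]
      exact ⟨Finset.subset_univ SV, hdisjS.symm⟩
    have e1 : ↥A ≃ ↥SU := Finset.equivOfCardEq (by rw [hA, hSUcard])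
    have e2 : ↥B ≃ ↥SV := Finset.equivOfCardEq (by rw [hB, hSVcard])
    have e3 : ↥C ≃ ↥SC := Finset.equivOfCardEq (by rw [hCcard, hSCcard])
    set g : Fin n → Fin n := fun x =>
      if hx : x ∈ A then (e1 ⟨x, hx⟩ : Fin n)
      else if hx' : x ∈ B then (e2 ⟨x, hx'⟩ : Fin n)
      else (e3 ⟨x, by rw [hC]; simp only [Finset.mem_sdiff, Finset.mem_univ, true_and]
                      exact ⟨hx, hx'⟩⟩ : Fin n) with hg
    -- membership properties
    have hSU_not_SV : ∀ y : Fin n, y ∈ SU → y ∉ SV := fun y hy =>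
      Finset.disjoint_left.mp hdisjS hy
    have hSC_not : ∀ y : Fin n, y ∈ SC → y ∉ SU ∧ y ∉ SV := by
      intro y hy
      rw [hSC] at hy
      simp only [Finset.mem_sdiff, Finset.mem_univ, true_and] at hy
      exact ⟨hy.1, hy.2⟩
    have hgU : ∀ x, g x ∈ SU ↔ x ∈ A := by
      intro x
      rw [hg]
      by_cases hx : x ∈ A
      · simp only [dif_pos hx]
        exact ⟨fun _ => hx, fun _ => (e1 ⟨x, hx⟩).2⟩
      · simp only [dif_neg hx]
        by_cases hx' : x ∈ B
        · simp only [dif_pos hx']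
          constructor
          · intro hc
            exact absurd hc (fun hc => hSU_not_SV _ hc (e2 ⟨x, hx'⟩).2)
          · intro hc; exact absurd hc hx
        · simp only [dif_neg hx']
          constructor
          · intro hc
            exact absurd hc (hSC_not _ (e3 ⟨x, _⟩).2).1
          · intro hc; exact absurd hc hx
    have hgV : ∀ x, g x ∈ SV ↔ x ∈ B := by
      intro x
      rw [hg]
      by_cases hx : x ∈ A
      · simp only [dif_pos hx]
        constructor
        · intro hc
          exact absurd hc (hSU_not_SV _ (e1 ⟨x, hx⟩).2)
        · intro hc
          exact absurd hc (Finset.disjoint_left.mp hAB hx)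
      · simp only [dif_neg hx]
        by_cases hx' : x ∈ B
        · simp only [dif_pos hx']
          exact ⟨fun _ => hx', fun _ => (e2 ⟨x, hx'⟩).2⟩
        · simp only [dif_neg hx']
          constructor
          · intro hc
            exact absurd hc (hSC_not _ (e3 ⟨x, _⟩).2).2
          · intro hc; exact absurd hc hx'
    -- injectivity
    have hginj : Function.Injective g := by
      intro x y hxy
      have hxA : x ∈ A ↔ y ∈ A := by rw [← hgU x, ← hgU y, hxy]
      have hxB : x ∈ B ↔ y ∈ B := by rw [← hgV x, ← hgV y, hxy]
      rw [hg] at hxy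
      by_cases hx : x ∈ A
      · have hy : y ∈ A := hxA.mp hx
        simp only [dif_pos hx, dif_pos hy] at hxy
        have := e1.injective (Subtype.coe_injective hxy)
        exact congrArg Subtype.val this
      · have hy : y ∉ A := fun hc => hx (hxA.mpr hc)
        by_cases hx' : x ∈ B
        · have hy' : y ∈ B := hxB.mp hx'
          simp only [dif_neg hx, dif_neg hy, dif_pos hx', dif_pos hy'] at hxy
          have := e2.injective (Subtype.coe_injective hxy)
          exact congrArg Subtype.val this
        · have hy' : y ∉ B := fun hc => hx' (hxB.mpr hc)
          simp only [dif_neg hx, dif_neg hy, dif_neg hx', dif_neg hy'] at hxy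
          have := e3.injective (Subtype.coe_injective hxy)
          exact congrArg Subtype.val this
    have hgbij : Function.Bijective g := Finite.injective_iff_bijective.mp hginj
    set gE : Fin n ≃ Fin n := Equiv.ofBijective g hgbij with hgE
    refine ⟨fun x => M (g x), ?_, ?_, ?_⟩
    · -- EquivD via Iso
      intro π
      have : typeCount (fun x => M (g x)) π = typeCount M π := by
        rw [typeCount, typeCount]
        have hpre : {x : Fin n | M (g x) = π} = ⇑gE.symm '' {y : Fin n | M y = π} := by
          ext x
          simp only [Set.mem_setOf_eq, Set.mem_image]
          constructor
          · intro hx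
            exact ⟨g x, hx, gE.symm_apply_apply x⟩
          · rintro ⟨y, hy, rfl⟩
            have : g (gE.symm y) = y := gE.apply_symm_apply y
            rw [this]
            exact hy
        rw [hpre, Set.ncard_image_of_injective _ gE.symm.injective]
      rw [this]
    · intro x
      rw [← hgU x]
      rw [hSU]
      simp
    · intro x
      rw [← hgV x]
      rw [hSV]
      simp
  -- build the injection
  have : ∀ p : {p // p ∈ F}, ∃ M' : UModel τ n, EquivD d M' M ∧
      (∀ x, M' x ∈ U ↔ x ∈ p.1.1) ∧ (∀ x, M' x ∈ V ↔ x ∈ p.1.2) := by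
    rintro ⟨⟨A, B⟩, hp⟩
    rw [hF, Finset.mem_sigma] at hp
    obtain ⟨hpA, hpB⟩ := hp
    have hA : A.card = a := (Finset.mem_powersetCard.mp hpA).2
    obtain ⟨hBsub, hBcard⟩ := Finset.mem_powersetCard.mp hpB
    have hAB : Disjoint A B := by
      rw [Finset.disjoint_left]
      intro x hx hx'
      have := hBsub hx'
      simp only [Finset.mem_sdiff] at this
      exact this.2 hx
    exact hconstr A B hA hBcard hAB
  choose Φ hΦ1 hΦ2 hΦ3 using this
  have hΦinj : Function.Injective (fun p : {p // p ∈ F} =>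
      (⟨Φ p, hΦ1 p⟩ : {M' : UModel τ n // EquivD d M' M})) := by
    intro p q hpq
    simp only [Subtype.mk.injEq] at hpq
    have hA : p.1.1 = q.1.1 := by
      ext x
      rw [← hΦ2 p x, hpq, hΦ2 q x]
    have hB : p.1.2 = q.1.2 := by
      ext x
      rw [← hΦ3 p x, hpq, hΦ3 q x]
    rcases p with ⟨⟨A, B⟩, hp⟩
    rcases q with ⟨⟨A', B'⟩, hq⟩
    simp only at hA hB
    subst hA hB
    rfl
  haveI : Finite {M' : UModel τ n // EquivD d M' M} := by
    have : Finite (Set τ) := inferInstance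
    exact Subtype.finite
  have hle := Nat.card_le_card_of_injective _ hΦinj
  have hcardP : Nat.card {p // p ∈ F} = F.card := by
    simp [Nat.card_eq_fintype_card]
  rw [hcardP, hcardF] at hle
  exact hle

open Classical in
lemma typeCount_mem_sum (M : UModel τ n) (𝒜 : Finset (Set τ)) :
    Set.ncard {x : Fin n | M x ∈ (↑𝒜 : Set (Set τ))} = ∑ π ∈ 𝒜, typeCount M π := by
  classical
  have e1 : {x : Fin n | M x ∈ (↑𝒜 : Set (Set τ))} =
      ↑(Finset.univ.filter (fun x : Fin n => M x ∈ 𝒜)) := by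
    ext x
    simp
  rw [e1, Set.ncard_coe_finset, card_filter_mem_sum]
  exact (Finset.sum_congr rfl fun π _ => (typeCount_eq_card M π).symm)

lemma sum_typeCount (M : UModel τ n) : ∑ π : Set τ, typeCount M π = n := by
  classical
  rw [Finset.sum_congr rfl fun π _ => typeCount_eq_card M π]
  exact sum_card_fibers M

lemma card_equivD_ge (M : UModel τ n) (d : ℕ) (U V : Set (Set τ)) (hUV : Disjoint U V) :
    n.choose (Set.ncard {x : Fin n | M x ∈ U}) *
      ((n - Set.ncard {x : Fin n | M x ∈ U}).choose (Set.ncard {x : Fin n | M x ∈ V}))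
      ≤ Nat.card {M' : UModel τ n // EquivD d M' M} := by
  classical
  have eU : {x : Fin n | M x ∈ U} =
      ↑(Finset.univ.filter (fun x : Fin n => M x ∈ U)) := by
    ext x
    simp
  have eV : {x : Fin n | M x ∈ V} =
      ↑(Finset.univ.filter (fun x : Fin n => M x ∈ V)) := by
    ext x
    simp
  rw [eU, eV, Set.ncard_coe_finset, Set.ncard_coe_finset]
  exact card_equivD_ge_aux M d U V hUV

lemma card_equivD_ge_one (M : UModel τ n) (d : ℕ) (U : Set (Set τ)) :
    n.choose (Set.ncard {x : Fin n | M x ∈ U})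
      ≤ Nat.card {M' : UModel τ n // EquivD d M' M} := by
  have h := card_equivD_ge M d U ∅ (by simp)
  have e2 : Set.ncard {x : Fin n | M x ∈ (∅ : Set (Set τ))} = 0 := by
    simp
  rw [e2, Nat.choose_zero_right, mul_one] at h
  exact h

lemma card_equivD_ge_single (M : UModel τ n) (d : ℕ) (π : Set τ) :
    n.choose (typeCount M π) ≤ Nat.card {M' : UModel τ n // EquivD d M' M} := by
  have h := card_equivD_ge M d {π} ∅ (by simp)
  have e1 : {x : Fin n | M x ∈ ({π} : Set (Set τ))} = {x : Fin n | M x = π} := rfl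
  have e2 : Set.ncard {x : Fin n | M x ∈ (∅ : Set (Set τ))} = 0 := by
    simp [Set.ncard_empty]
  rw [e1, e2, Nat.choose_zero_right, mul_one] at h
  exact h

end CountingModels
section MainConstruction

open Finset

private lemma list_sum_toList {α : Type*} (R : Finset α) (f : α → ℕ) :
    (R.toList.map f).sum = ∑ π ∈ R, f π := by
  calc (R.toList.map f).sum = ((R.toList.map f : List ℕ) : Multiset ℕ).sum := by
        rw [Multiset.sum_coe]
    _ = (Multiset.map f R.val).sum := by
        rw [← Multiset.map_coe, Finset.coe_toList]
    _ = ∑ π ∈ R, f π := rfl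

variable {τ : Type} [Fintype τ] {n : ℕ}

open Classical in
lemma exists_defining_sentence (M : UModel τ n) (d : ℕ) (hd : 1 ≤ d) (hn : 0 < n)
    (π0 : Set τ) (hsmall : ∀ π : Set τ, π ≠ π0 → typeCount M π < d) :
    ∃ φ : FO τ, φ.IsSentence ∧ φ.qrank ≤ d ∧ DefinesD d φ M ∧
      φ.size ≤ 6 * (∑ π ∈ Finset.univ.erase π0, typeCount M π)
        + Fintype.card (Set τ) * (4 * Fintype.card τ + 3)
        + Fintype.card (Set τ) * (2 * Fintype.card τ + 2) + 2 := by
  classical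
  set Realized := Finset.univ.filter (fun π : Set τ => typeCount M π ≠ 0) with hRe
  set R := Realized.erase π0 with hR
  set LRe := Realized.toList with hLRe
  set clause := FO.all 0 (FOG.orTypes 0 LRe) with hclause
  set φ := (R.toList.map (fun π => FOG.exactly π (typeCount M π))).foldr FO.and clause with hφ
  have hmemR : ∀ π ∈ R, π ≠ π0 ∧ 1 ≤ typeCount M π := by
    intro π hπ
    obtain ⟨hne, hmem⟩ := Finset.mem_erase.mp hπ
    rw [hRe, Finset.mem_filter] at hmem
    exact ⟨hne, by omega⟩
  refine ⟨φ, ?_, ?_, ?_, ?_⟩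
  · -- sentence
    rw [FO.IsSentence, hφ]
    apply FOG.freeVars_foldr_and
    · show (FOG.orTypes 0 LRe).freeVars \ {0} = ∅
      rw [FOG.freeVars_orTypes]
      simp
    · intro ψ hψ
      obtain ⟨π, _, rfl⟩ := List.mem_map.mp hψ
      exact FOG.freeVars_exactly π _
  · -- qrank
    rw [hφ]
    apply FOG.qrank_foldr_and
    · show (FOG.orTypes 0 LRe).qrank + 1 ≤ d
      rw [FOG.qrank_orTypes]
      omega
    · intro ψ hψ
      obtain ⟨π, hπ, rfl⟩ := List.mem_map.mp hψ
      rw [Finset.mem_toList] at hπ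
      rw [FOG.qrank_exactly]
      have := hsmall π (hmemR π hπ).1
      omega
  · -- DefinesD
    have hsatIff : ∀ M' : UModel τ n, Sat M' φ ↔
        ((∀ π ∈ R, typeCount M' π = typeCount M π) ∧
          ∀ x : Fin n, typeCount M (M' x) ≠ 0) := by
      intro M'
      constructor
      · intro hS
        have hs0 := hS (fun _ => (⟨0, hn⟩ : Fin n))
        rw [hφ, FOG.sat_foldr_and] at hs0
        obtain ⟨hl, hc⟩ := hs0
        constructor
        · intro π hπ
          have hmem := List.mem_map_of_mem (f := fun π => FOG.exactly π (typeCount M π))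
            (Finset.mem_toList.mpr hπ)
          have hsat := hl _ hmem
          rw [FOG.sat_exactly _ _ _ _ (hmemR π hπ).2] at hsat
          rw [typeCount_eq_card M' π]
          exact hsat
        · intro x
          have hx : FO.sat M' (Function.update (fun _ => (⟨0, hn⟩ : Fin n)) 0 x)
              (FOG.orTypes 0 LRe) := hc x
          rw [FOG.sat_orTypes] at hx
          obtain ⟨π, hπL, hπx⟩ := hx
          rw [Function.update_self] at hπx
          rw [hπx]
          rw [hLRe, Finset.mem_toList, hRe, Finset.mem_filter] at hπL
          exact hπL.2
      · rintro ⟨h1, h2⟩ s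
        rw [hφ, FOG.sat_foldr_and]
        constructor
        · intro ψ hψ
          obtain ⟨π, hπ, rfl⟩ := List.mem_map.mp hψ
          rw [Finset.mem_toList] at hπ
          rw [FOG.sat_exactly _ _ _ _ (hmemR π hπ).2, ← typeCount_eq_card]
          exact h1 π hπ
        · show ∀ a : Fin n, FO.sat M' (Function.update s 0 a) (FOG.orTypes 0 LRe)
          intro a
          rw [FOG.sat_orTypes]
          refine ⟨M' a, ?_, by rw [Function.update_self]⟩
          rw [hLRe, Finset.mem_toList, hRe, Finset.mem_filter]
          exact ⟨Finset.mem_univ _, h2 a⟩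
    intro M'
    rw [hsatIff M']
    constructor
    · rintro ⟨h1, h2⟩
      have hall : ∀ π : Set τ, π ≠ π0 → typeCount M' π = typeCount M π := by
        intro π hπ0
        by_cases hreal : typeCount M π = 0
        · have hz : typeCount M' π = 0 := by
            rw [typeCount_eq_card, Finset.card_eq_zero, Finset.filter_eq_empty_iff]
            intro x _ hx
            exact h2 x (by rw [hx]; exact hreal)
          rw [hz, hreal]
        · exact h1 π (Finset.mem_erase.mpr ⟨hπ0,
            by rw [hRe, Finset.mem_filter]; exact ⟨Finset.mem_univ _, hreal⟩⟩)
      have hπ0eq : typeCount M' π0 = typeCount M π0 := by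
        have hs1 := sum_typeCount M'
        have hs2 := sum_typeCount M
        have e1 : ∑ π ∈ Finset.univ.erase π0, typeCount M' π
            = ∑ π ∈ Finset.univ.erase π0, typeCount M π :=
          Finset.sum_congr rfl fun π hπ => hall π (Finset.mem_erase.mp hπ).1
        have e2 := Finset.sum_erase_add Finset.univ (typeCount M') (Finset.mem_univ π0)
        have e3 := Finset.sum_erase_add Finset.univ (typeCount M) (Finset.mem_univ π0)
        omega
      intro π
      by_cases hp : π = π0
      · rw [hp, hπ0eq]
      · rw [hall π hp]
    · intro hEq
      constructor
      · intro π hπ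
        have hlt : typeCount M π < d := hsmall π (hmemR π hπ).1
        have := hEq π
        omega
      · intro x
        intro hzero
        have h0 := hEq (M' x)
        have hge : 1 ≤ typeCount M' (M' x) := by
          rw [typeCount_eq_card]
          refine Finset.card_pos.mpr ⟨x, ?_⟩
          simp
        rw [hzero] at h0
        omega
  · -- size
    rw [hφ, FOG.size_foldr_and]
    have hclsize : clause.size = (FOG.orTypes 0 LRe).size + 1 := rfl
    have horsize := FOG.size_orTypes (τ := τ) 0 LRe
    have hlen : LRe.length = Realized.card := by rw [hLRe, Finset.length_toList]
    have hRecard : Realized.card ≤ Fintype.card (Set τ) := by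
      calc Realized.card ≤ (Finset.univ : Finset (Set τ)).card := Finset.card_le_card
            (Finset.subset_univ _)
        _ = Fintype.card (Set τ) := Finset.card_univ
    have hRcard : R.card ≤ Fintype.card (Set τ) := by
      calc R.card ≤ (Finset.univ : Finset (Set τ)).card := Finset.card_le_card
            (Finset.subset_univ _)
        _ = Fintype.card (Set τ) := Finset.card_univ
    have hmapmap : ((R.toList.map (fun π => FOG.exactly π (typeCount M π))).map
        (fun ψ : FO τ => ψ.size + 1))
        = R.toList.map (fun π => (FOG.exactly π (typeCount M π)).size + 1) := by
      rw [List.map_map]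
      rfl
    rw [hmapmap, list_sum_toList]
    have hterm : ∀ π ∈ R, (FOG.exactly π (typeCount M π)).size + 1
        = 4 * Fintype.card τ + 3 + 6 * typeCount M π := by
      intro π hπ
      rw [FOG.size_exactly]
      have := (hmemR π hπ).2
      omega
    rw [Finset.sum_congr rfl hterm]
    rw [Finset.sum_add_distrib]
    have hsum1 : ∑ _π ∈ R, (4 * Fintype.card τ + 3) = R.card * (4 * Fintype.card τ + 3) := by
      rw [Finset.sum_const, smul_eq_mul]
    have hsum2 : ∑ π ∈ R, 6 * typeCount M π = 6 * ∑ π ∈ R, typeCount M π := by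
      rw [Finset.mul_sum]
    rw [hsum1, hsum2]
    have hsub : ∑ π ∈ R, typeCount M π ≤ ∑ π ∈ Finset.univ.erase π0, typeCount M π := by
      apply Finset.sum_le_sum_of_subset
      rw [hR]
      exact Finset.erase_subset_erase π0 (Finset.subset_univ Realized)
    have h1' : R.card * (4 * Fintype.card τ + 3)
        ≤ Fintype.card (Set τ) * (4 * Fintype.card τ + 3) :=
      Nat.mul_le_mul_right _ hRcard
    have h2' : clause.size ≤ Fintype.card (Set τ) * (2 * Fintype.card τ + 2) + 2 := by
      rw [hclsize, horsize, hlen]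
      have : Realized.card * (2 * Fintype.card τ + 2)
          ≤ Fintype.card (Set τ) * (2 * Fintype.card τ + 2) :=
        Nat.mul_le_mul_right _ hRecard
      omega
    omega

end MainConstruction

/-- Let `d ≥ 1`, `M` a `τ`-model of size `n`, and `h ∈ {1,…,d−1}`.
If `H_B^d(M) < log₂(C(n,h))`, then `C_d(M) < 6h + c_τ`. -/
theorem descCompD_entropy_upper (τ : Type) [Fintype τ] {n d : ℕ} (hd : 1 ≤ d)
    (M : UModel τ n) (h : ℕ) (h1 : 1 ≤ h) (h2 : h < d)
    (hH : HBd d M < Real.logb 2 (n.choose h : ℝ)) :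
    descCompD d M < 6 * h + cTau τ := by
  classical
  by_cases hcard0 : Fintype.card τ = 0
  · -- degenerate vocabulary: all models are equivalent
    have hempty : IsEmpty τ := Fintype.card_eq_zero_iff.mp hcard0
    set φ : FO τ := FO.all 0 (FO.eq 0 0) with hφ
    have hsent : φ.IsSentence := by
      rw [FO.IsSentence, hφ]
      show (FO.freeVars (FO.eq 0 0)) \ {0} = ∅
      show ({0, 0} : Finset ℕ) \ {0} = ∅
      simp
    have hq : φ.qrank ≤ d := by
      show (FO.eq 0 0).qrank + 1 ≤ d
      show 0 + 1 ≤ d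
      omega
    have htriv : ∀ W : UModel τ n, ∀ π : Set τ, typeCount W π = n := by
      intro W π
      have : {a : Fin n | W a = π} = Set.univ := by
        ext a
        simp only [Set.mem_setOf_eq, Set.mem_univ, iff_true]
        ext P
        exact (hempty.false P).elim
      rw [typeCount, this, Set.ncard_univ, Nat.card_eq_fintype_card, Fintype.card_fin]
    have hdef : DefinesD d φ M := by
      intro M'
      constructor
      · intro _ π
        rw [htriv M' π, htriv M π]
      · intro _ s
        intro a
        rfl
    have hmem : (2 : ℕ) ∈ {s : ℕ | ∃ ψ : FO τ, ψ.IsSentence ∧ ψ.qrank ≤ d ∧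
        DefinesD d ψ M ∧ ψ.size = s} := ⟨φ, hsent, hq, hdef, rfl⟩
    have hle : descCompD d M ≤ 2 := Nat.sInf_le hmem
    have hct : cTau τ = 0 := by rw [cTau, hcard0]; ring
    omega
  -- main case
  have hc1 : 1 ≤ Fintype.card τ := by omega
  haveI : Finite (Set τ) := inferInstance
  haveI : Finite {M' : UModel τ n // EquivD d M' M} := Subtype.finite
  haveI : Nonempty {M' : UModel τ n // EquivD d M' M} := ⟨⟨M, fun π => rfl⟩⟩
  have hNpos : 0 < Nat.card {M' : UModel τ n // EquivD d M' M} := Nat.card_pos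
  set N := Nat.card {M' : UModel τ n // EquivD d M' M} with hN
  have hH' : Real.logb 2 (N : ℝ) < Real.logb 2 (n.choose h : ℝ) := hH
  have hchpos : 0 < n.choose h := by
    by_contra hc
    have hc0 : n.choose h = 0 := by omega
    rw [hc0] at hH'
    have h0 : (0:ℝ) ≤ Real.logb 2 (N : ℝ) :=
      Real.logb_nonneg (by norm_num) (by exact_mod_cast hNpos)
    simp only [Nat.cast_zero, Real.logb_zero] at hH'
    linarith
  have hNlt : N < n.choose h := by
    by_contra hc
    push_neg at hc
    have : Real.logb 2 (n.choose h : ℝ) ≤ Real.logb 2 (N : ℝ) :=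
      Real.logb_le_logb_of_le (by norm_num) (by exact_mod_cast hchpos) (by exact_mod_cast hc)
    linarith
  have hhn : h ≤ n := by
    by_contra hc
    push_neg at hc
    rw [Nat.choose_eq_zero_of_lt hc] at hchpos
    omega
  have hchlt : 1 < n.choose h := by omega
  have hhn' : h < n := by
    rcases eq_or_lt_of_le hhn with rfl | hlt
    · rw [Nat.choose_self] at hchlt
      omega
    · exact hlt
  set H := min h (n - h) with hHdef
  have hH1 : 1 ≤ H := by omega
  have h2H : 2 * H ≤ n := by omega
  have hHh : H ≤ h := by omega
  have hCH : n.choose H = n.choose h := by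
    rcases le_total h (n - h) with hle | hle
    · have : H = h := by omega
      rw [this]
    · have : H = n - h := by omega
      rw [this, Nat.choose_symm hhn]
  have hNltH : N < n.choose H := by rw [hCH]; exact hNlt
  have hdich : ∀ π : Set τ, typeCount M π < H ∨ n < typeCount M π + H := by
    intro π
    by_contra hc
    push_neg at hc
    obtain ⟨hge, hle⟩ := hc
    have hw := choose_le_choose_window hge hle
    have hsing := card_equivD_ge_single M d π
    rw [← hN] at hsing
    linarith
  by_cases hbig : ∃ π0 : Set τ, n < typeCount M π0 + H
  · -- BIG case: build the sentence
    obtain ⟨π0, hπ0⟩ := hbig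
    have hsumall := sum_typeCount M
    have herase := Finset.sum_erase_add Finset.univ (typeCount M) (Finset.mem_univ π0)
    set r := ∑ π ∈ Finset.univ.erase π0, typeCount M π with hr
    have hm0n : typeCount M π0 ≤ n := by omega
    have hrH : r < H := by omega
    have hsmall : ∀ π : Set τ, π ≠ π0 → typeCount M π < d := by
      intro π hπ
      have hle : typeCount M π ≤ r := by
        rw [hr]
        exact Finset.single_le_sum (fun i _ => Nat.zero_le _)
          (Finset.mem_erase.mpr ⟨hπ, Finset.mem_univ _⟩)
      omega
    obtain ⟨φ, hsent, hq, hdef, hsize⟩ := exists_defining_sentence M d hd (by omega) π0 hsmall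
    have hmem : φ.size ∈ {s : ℕ | ∃ ψ : FO τ, ψ.IsSentence ∧ ψ.qrank ≤ d ∧
        DefinesD d ψ M ∧ ψ.size = s} := ⟨φ, hsent, hq, hdef, rfl⟩
    have hle : descCompD d M ≤ φ.size := Nat.sInf_le hmem
    -- arithmetic
    set c := Fintype.card τ with hc
    set t := Fintype.card (Set τ) with ht
    have htc : t = 2 ^ c := by rw [ht, hc]; exact Fintype.card_set
    have ht1 : 1 ≤ t := by rw [htc]; exact Nat.one_le_pow c 2 (by norm_num)
    have htu : t ≤ c * t := Nat.le_mul_of_pos_left t (by omega)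
    have hctau : cTau τ = 15 * (c * t) := by
      rw [cTau, ← hc, ← htc]
      ring
    have h5 : 5 * t ≤ 9 * (c * t) := by
      calc 5 * t ≤ 5 * (c * t) := Nat.mul_le_mul_left 5 htu
        _ ≤ 9 * (c * t) := Nat.mul_le_mul_right _ (by omega)
    have hfinal : φ.size < 6 * h + cTau τ := by
      calc φ.size ≤ 6*r + t*(4*c+3) + t*(2*c+2) + 2 := hsize
        _ = 6*r + (6*(c*t) + 5*t) + 2 := by ring
        _ ≤ 6*r + (6*(c*t) + 9*(c*t)) + 2 := by linarith
        _ = 6*r + 15*(c*t) + 2 := by ring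
        _ < 6*h + 15*(c*t) := by linarith
        _ = 6*h + cTau τ := by rw [hctau]
    exact lt_of_le_of_lt hle hfinal
  · -- SMALL case: contradiction
    exfalso
    push_neg at hbig
    have hallsmall : ∀ π : Set τ, typeCount M π < H := by
      intro π
      rcases hdich π with hlt | hgt
      · exact hlt
      · exact absurd hgt (by have := hbig π; omega)
    set Fam := (Finset.univ : Finset (Finset (Set τ))).filter
      (fun 𝒜 => ∑ π ∈ 𝒜, typeCount M π < H) with hFam
    have hFamne : Fam.Nonempty := by
      refine ⟨∅, ?_⟩
      rw [hFam, Finset.mem_filter]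
      refine ⟨Finset.mem_univ _, ?_⟩
      rw [Finset.sum_empty]
      omega
    obtain ⟨𝒜₀, h𝒜mem, hmax⟩ : ∃ m ∈ Fam, ∀ x ∈ Fam, ¬ m < x := by
      obtain ⟨m, hm⟩ := Finset.exists_maximal hFamne
      exact ⟨m, hm.1, fun x hx hlt => lt_irrefl _ (lt_of_lt_of_le hlt (hm.2 hx hlt.le))⟩
    have ha : ∑ π ∈ 𝒜₀, typeCount M π < H := by
      rw [hFam, Finset.mem_filter] at h𝒜mem
      exact h𝒜mem.2
    have hsumall := sum_typeCount M
    obtain ⟨πc, hπcnot, hπcpos⟩ : ∃ π, π ∉ 𝒜₀ ∧ typeCount M π ≠ 0 := by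
      by_contra hcon
      push_neg at hcon
      have : ∑ π : Set τ, typeCount M π = ∑ π ∈ 𝒜₀, typeCount M π :=
        (Finset.sum_subset (Finset.subset_univ 𝒜₀) (fun π _ hπ => hcon π hπ)).symm
      omega
    have hinsert : ¬ (∑ π ∈ insert πc 𝒜₀, typeCount M π < H) := by
      intro hcon
      refine hmax (insert πc 𝒜₀) ?_ (Finset.ssubset_insert hπcnot)
      rw [hFam, Finset.mem_filter]
      exact ⟨Finset.mem_univ _, hcon⟩
    rw [Finset.sum_insert hπcnot] at hinsert
    set a := ∑ π ∈ 𝒜₀, typeCount M π with haa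
    set b := typeCount M πc with hbb
    have hbH : b < H := hallsmall πc
    have hab1 : H ≤ a + b := by omega
    have hab2 : a + b ≤ n := by
      have hsub : ∑ π ∈ insert πc 𝒜₀, typeCount M π ≤ ∑ π : Set τ, typeCount M π :=
        Finset.sum_le_sum_of_subset (Finset.subset_univ _)
      rw [Finset.sum_insert hπcnot] at hsub
      omega
    -- window on a+b
    have hw := card_equivD_ge_one M d (↑(insert πc 𝒜₀) : Set (Set τ))
    rw [typeCount_mem_sum M (insert πc 𝒜₀), Finset.sum_insert hπcnot, ← hN] at hw
    have hwin : n < (a + b) + H := by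
      by_contra hcon
      push_neg at hcon
      have := choose_le_choose_window hab1 hcon
      have hcomm : b + a = a + b := by omega
      rw [hcomm] at hw
      linarith
    -- product bound
    have hp := card_equivD_ge M d (↑𝒜₀ : Set (Set τ)) {πc}
      (by rw [Set.disjoint_singleton_right]; simpa using hπcnot)
    rw [typeCount_mem_sum M 𝒜₀, ← hN] at hp
    have hsingle : Set.ncard {x : Fin n | M x ∈ ({πc} : Set (Set τ))} = b := rfl
    rw [hsingle] at hp
    have hprod := choose_prod_ge (H := H) (by omega) (by omega) hab1 hab2 hwin
    linarith
end
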